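/- arXiv:1412.5727 — 2 statements merged into one kernel-verified Lean document; each statement's English description precedes it below -/
import Mathlib

section
/- If G is a connected finite simple graph and H is a proper spanning subgraph of G (same vertex set, strictly fewer edges), then G \succ H, i.e., m(H, x) > m(G, x) for all real x \ge t(G); in particular t(H) < t(G). -/
open Polynomial

/-- Number of matchings with exactly `k` edges in `G`. -/
noncomputable def matchingCount {V : Type*} [Fintype V] (G : SimpleGraph V) (k : ℕ) : ℕ :=
  Nat.card {s : Finset (Sym2 V) // s.card = k ∧ (∀ e ∈ s, e ∈ G.edgeSet) ∧
    ∀ e ∈ s, ∀ f ∈ s, e ≠ f → ∀ x : V, x ∈ e → x ∉ f}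

/-- The matching polynomial `m(G,x) = ∑ (-1)^k m_k(G) x^(n-2k)`. -/
noncomputable def matchPoly {V : Type*} [Fintype V] (G : SimpleGraph V) : Polynomial ℝ :=
  ∑ k ∈ Finset.range (Fintype.card V + 1),
    Polynomial.C ((-1 : ℝ) ^ k * (matchingCount G k : ℝ)) *
      Polynomial.X ^ (Fintype.card V - 2 * k)

/-- The maximum real root `t(G)` of the matching polynomial. -/
noncomputable def maxRoot {V : Type*} [Fintype V] (G : SimpleGraph V) : ℝ :=
  sSup {x : ℝ | (matchPoly G).eval x = 0}

open Polynomial Finset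
open scoped Classical
set_option linter.unusedSectionVars false
namespace MatchDev
variable {V : Type*} [Fintype V]
def isM (G : SimpleGraph V) (W : Finset V) (M : Finset (Sym2 V)) : Prop :=
  (∀ e ∈ M, e ∈ G.edgeSet) ∧ (∀ e ∈ M, ∀ v ∈ e, v ∈ W) ∧
  (∀ e ∈ M, ∀ f ∈ M, e ≠ f → ∀ x : V, x ∈ e → x ∉ f)
noncomputable def mSet (G : SimpleGraph V) (W : Finset V) : Finset (Finset (Sym2 V)) :=
  Finset.univ.filter (isM G W)
noncomputable def cov (W : Finset V) (M : Finset (Sym2 V)) : Finset V :=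
  W.filter (fun v => ∃ e ∈ M, v ∈ e)
noncomputable def unc (W : Finset V) (M : Finset (Sym2 V)) : Finset V :=
  W.filter (fun v => ∀ e ∈ M, v ∉ e)
noncomputable def pE (G : SimpleGraph V) (W : Finset V) (x : ℝ) : ℝ :=
  ∑ M ∈ mSet G W, (-1 : ℝ) ^ M.card * x ^ (unc W M).card
variable {G : SimpleGraph V} {W : Finset V} {M : Finset (Sym2 V)}
lemma isM.weaken {e : Sym2 V} (h : isM G W (insert e M)) : isM G W M :=
  ⟨fun f hf => h.1 f (Finset.mem_insert_of_mem hf),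
   fun f hf => h.2.1 f (Finset.mem_insert_of_mem hf),
   fun f hf g hg => h.2.2 f (Finset.mem_insert_of_mem hf) g (Finset.mem_insert_of_mem hg)⟩

lemma card_cov (hM : isM G W M) : (cov W M).card = 2 * M.card := by
  classical
  induction M using Finset.induction with
  | empty => simp [cov]
  | @insert e M heM ih =>
    induction e using Sym2.ind with
    | _ a b =>
      have hadj : G.Adj a b := (SimpleGraph.mem_edgeSet G).1 (hM.1 _ (Finset.mem_insert_self _ _))
      have hab : a ≠ b := hadj.ne
      have haW : a ∈ W := hM.2.1 _ (Finset.mem_insert_self _ _) a (by simp)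
      have hbW : b ∈ W := hM.2.1 _ (Finset.mem_insert_self _ _) b (by simp)
      have key : ∀ v ∈ s(a, b), v ∉ cov W M := by
        intro v hv
        simp only [cov, Finset.mem_filter, not_and, not_exists]
        intro _ f hf hvf
        have hne : s(a, b) ≠ f := fun h => heM (h ▸ hf)
        exact hM.2.2 _ (Finset.mem_insert_self _ _) f (Finset.mem_insert_of_mem hf) hne v hv hvf
      have hcov : cov W (insert s(a, b) M) = insert a (insert b (cov W M)) := by
        ext v
        simp only [cov, Finset.mem_filter, Finset.mem_insert, Finset.mem_filter]
        constructor
        · rintro ⟨hvW, f, hf, hvf⟩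
          rcases hf with rfl | hf
          · rcases Sym2.mem_iff.1 hvf with rfl | rfl
            · exact Or.inl rfl
            · exact Or.inr (Or.inl rfl)
          · exact Or.inr (Or.inr ⟨hvW, f, hf, hvf⟩)
        · rintro (rfl | rfl | ⟨hvW, f, hf, hvf⟩)
          · exact ⟨haW, _, Or.inl rfl, by simp⟩
          · exact ⟨hbW, _, Or.inl rfl, by simp⟩
          · exact ⟨hvW, f, Or.inr hf, hvf⟩
      rw [hcov, Finset.card_insert_of_notMem, Finset.card_insert_of_notMem,
        Finset.card_insert_of_notMem heM, ih hM.weaken]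
      · ring
      · exact key b (by simp)
      · simp only [Finset.mem_insert, not_or]
        exact ⟨hab, key a (by simp)⟩

lemma unc_eq_sdiff : unc W M = W \ cov W M := by
  ext v; simp only [unc, cov, Finset.mem_filter, Finset.mem_sdiff, not_and, not_exists]
  tauto

lemma cov_subset : cov W M ⊆ W := Finset.filter_subset _ _

lemma card_unc (hM : isM G W M) : (unc W M).card = W.card - 2 * M.card := by
  rw [unc_eq_sdiff, Finset.card_sdiff_of_subset cov_subset, card_cov hM]

lemma two_mul_card_le (hM : isM G W M) : 2 * M.card ≤ W.card := by
  rw [← card_cov hM]; exact Finset.card_le_card cov_subset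

lemma mem_mSet {M : Finset (Sym2 V)} : M ∈ mSet G W ↔ isM G W M := by simp [mSet]

noncomputable def extractV (u : V) (M : Finset (Sym2 V)) : V :=
  if h : ∃ v, s(u, v) ∈ M then h.choose else u

/-- vertex recursion -/
lemma pE_rec (u : V) (hu : u ∈ W) (x : ℝ) :
    pE G W x = x * pE G (W.erase u) x
      - ∑ v ∈ (W.erase u).filter (fun v => G.Adj u v), pE G ((W.erase u).erase v) x := by
  classical
  have hsplit : mSet G W = (mSet G W).filter (fun M => ∀ e ∈ M, u ∉ e) ∪
      (mSet G W).filter (fun M => ∃ e ∈ M, u ∈ e) := by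
    rw [← Finset.filter_or]
    refine (Finset.filter_true_of_mem fun M _ => ?_).symm
    by_cases h : ∃ e ∈ M, u ∈ e
    · exact Or.inr h
    · exact Or.inl (by push_neg at h; exact h)
  have hdisj : Disjoint ((mSet G W).filter (fun M => ∀ e ∈ M, u ∉ e))
      ((mSet G W).filter (fun M => ∃ e ∈ M, u ∈ e)) := by
    rw [Finset.disjoint_left]
    intro M h1 h2
    obtain ⟨e, he, hue⟩ := (Finset.mem_filter.1 h2).2
    exact absurd hue ((Finset.mem_filter.1 h1).2 e he)
  have hA : (mSet G W).filter (fun M => ∀ e ∈ M, u ∉ e) = mSet G (W.erase u) := by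
    ext M
    simp only [Finset.mem_filter, mem_mSet]
    constructor
    · rintro ⟨⟨h1, h2, h3⟩, h4⟩
      refine ⟨h1, fun e he v hv => Finset.mem_erase.2 ⟨?_, h2 e he v hv⟩, h3⟩
      rintro rfl; exact h4 e he hv
    · rintro ⟨h1, h2, h3⟩
      refine ⟨⟨h1, fun e he v hv => Finset.mem_of_mem_erase (h2 e he v hv), h3⟩, ?_⟩
      intro e he hue
      exact absurd (h2 e he u hue) (Finset.notMem_erase u W)
  have hPartA : ∑ M ∈ mSet G (W.erase u), (-1 : ℝ) ^ M.card * x ^ (unc W M).card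
      = x * pE G (W.erase u) x := by
    rw [pE, Finset.mul_sum]
    refine Finset.sum_congr rfl fun M hM => ?_
    have hMW : isM G (W.erase u) M := mem_mSet.1 hM
    have huncM : unc W M = insert u (unc (W.erase u) M) := by
      ext v
      simp only [unc, Finset.mem_filter, Finset.mem_insert, Finset.mem_erase]
      constructor
      · rintro ⟨hvW, h⟩
        by_cases hvu : v = u
        · exact Or.inl hvu
        · exact Or.inr ⟨⟨hvu, hvW⟩, h⟩
      · rintro (rfl | ⟨⟨_, hvW⟩, h⟩)
        · refine ⟨hu, fun e he hve => ?_⟩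
          exact absurd (hMW.2.1 e he v hve) (Finset.notMem_erase v W)
        · exact ⟨hvW, h⟩
    have hnm : u ∉ unc (W.erase u) M := by
      simp only [unc, Finset.mem_filter]
      rintro ⟨h, -⟩
      exact Finset.notMem_erase u W h
    rw [huncM, Finset.card_insert_of_notMem hnm, pow_succ]
    ring
  have hPartB : ∑ M ∈ (mSet G W).filter (fun M => ∃ e ∈ M, u ∈ e),
      (-1 : ℝ) ^ M.card * x ^ (unc W M).card
      = - ∑ v ∈ (W.erase u).filter (fun v => G.Adj u v), pE G ((W.erase u).erase v) x := by
    have key : ∑ M ∈ (mSet G W).filter (fun M => ∃ e ∈ M, u ∈ e),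
        (-1 : ℝ) ^ M.card * x ^ (unc W M).card
        = ∑ p ∈ ((W.erase u).filter (fun v => G.Adj u v)).sigma
            (fun v => mSet G ((W.erase u).erase v)),
          (-((-1 : ℝ) ^ p.2.card * x ^ (unc ((W.erase u).erase p.1) p.2).card)) := by
      refine Finset.sum_nbij' (i := fun M => ⟨extractV u M, M.erase s(u, extractV u M)⟩)
        (j := fun p => insert s(u, p.1) p.2) ?_ ?_ ?_ ?_ ?_
      · -- i maps into the sigma set
        intro M hM
        have hMW := mem_mSet.1 (Finset.mem_filter.1 hM).1
        obtain ⟨e, he, hue⟩ := (Finset.mem_filter.1 hM).2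
        obtain ⟨w, rfl⟩ := Sym2.mem_iff_exists.1 hue
        have hex : ∃ v, s(u, v) ∈ M := ⟨w, he⟩
        have hsel : s(u, extractV u M) ∈ M := by
          rw [extractV, dif_pos hex]; exact hex.choose_spec
        set v0 := extractV u M with hv0
        have hadj : G.Adj u v0 := (SimpleGraph.mem_edgeSet G).1 (hMW.1 _ hsel)
        simp only [Finset.mem_sigma, Finset.mem_filter, Finset.mem_erase, mem_mSet]
        refine ⟨⟨⟨hadj.ne', hMW.2.1 _ hsel v0 (by simp)⟩, hadj⟩, ?_, ?_, ?_⟩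
        · exact fun f hf => hMW.1 f (Finset.mem_of_mem_erase hf)
        · intro f hf z hz
          have hfM : f ∈ M := Finset.mem_of_mem_erase hf
          have hfe : f ≠ s(u, v0) := Finset.ne_of_mem_erase hf
          have hdisjf := hMW.2.2 _ hsel f hfM (Ne.symm hfe)
          refine Finset.mem_erase.2 ⟨?_, Finset.mem_erase.2 ⟨?_, hMW.2.1 f hfM z hz⟩⟩
          · rintro rfl; exact hdisjf v0 (by simp) hz
          · rintro rfl; exact hdisjf z (by simp) hz
        · exact fun f hf g hg hfg => hMW.2.2 f (Finset.mem_of_mem_erase hf) g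
            (Finset.mem_of_mem_erase hg) hfg
      · -- j maps back
        rintro ⟨v, M'⟩ hp
        simp only [Finset.mem_sigma, Finset.mem_filter, Finset.mem_erase, mem_mSet] at hp
        obtain ⟨⟨⟨hvu, hvW⟩, hadj⟩, h1, h2, h3⟩ := hp
        have hnotmem : s(u, v) ∉ M' := by
          intro hmem
          have := h2 _ hmem u (by simp)
          exact (Finset.mem_erase.1 (Finset.mem_erase.1 this).2).1 rfl
        simp only [Finset.mem_filter, mem_mSet]
        refine ⟨⟨?_, ?_, ?_⟩, ⟨s(u, v), Finset.mem_insert_self _ _, by simp⟩⟩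
        · intro e he
          rcases Finset.mem_insert.1 he with rfl | he
          · exact (SimpleGraph.mem_edgeSet G).2 hadj
          · exact h1 e he
        · intro e he z hz
          rcases Finset.mem_insert.1 he with rfl | he
          · rcases Sym2.mem_iff.1 hz with rfl | rfl
            · exact hu
            · exact hvW
          · exact Finset.mem_of_mem_erase (Finset.mem_of_mem_erase (h2 e he z hz))
        · intro e he f hf hef z hze hzf
          have hzuv : ∀ g ∈ M', z ∈ g → z ≠ u ∧ z ≠ v := by
            intro g hg hzg
            have := h2 g hg z hzg
            exact ⟨(Finset.mem_erase.1 (Finset.mem_erase.1 this).2).1,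
              (Finset.mem_erase.1 this).1⟩
          rcases Finset.mem_insert.1 he with rfl | he
          · rcases Finset.mem_insert.1 hf with rfl | hf
            · exact hef rfl
            · rcases Sym2.mem_iff.1 hze with h | h
              · exact absurd h (hzuv f hf hzf).1
              · exact absurd h (hzuv f hf hzf).2
          · rcases Finset.mem_insert.1 hf with rfl | hf
            · rcases Sym2.mem_iff.1 hzf with h | h
              · exact absurd h (hzuv e he hze).1
              · exact absurd h (hzuv e he hze).2
            · exact h3 e he f hf hef z hze hzf
      · -- left inverse
        intro M hM
        obtain ⟨e, he, hue⟩ := (Finset.mem_filter.1 hM).2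
        obtain ⟨w, rfl⟩ := Sym2.mem_iff_exists.1 hue
        have hex : ∃ v, s(u, v) ∈ M := ⟨w, he⟩
        have hsel : s(u, extractV u M) ∈ M := by
          rw [extractV, dif_pos hex]; exact hex.choose_spec
        exact Finset.insert_erase hsel
      · -- right inverse
        rintro ⟨v, M'⟩ hp
        simp only [Finset.mem_sigma, Finset.mem_filter, Finset.mem_erase, mem_mSet] at hp
        obtain ⟨⟨⟨hvu, hvW⟩, hadj⟩, h1, h2, h3⟩ := hp
        have huM' : ∀ f ∈ M', u ∉ f := by
          intro f hf huf
          have := h2 f hf u huf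
          exact (Finset.mem_erase.1 (Finset.mem_erase.1 this).2).1 rfl
        have hvex : extractV u (insert s(u, v) M') = v := by
          have hex : ∃ w, s(u, w) ∈ insert s(u, v) M' := ⟨v, Finset.mem_insert_self _ _⟩
          rw [extractV, dif_pos hex]
          obtain hspec := hex.choose_spec
          rcases Finset.mem_insert.1 hspec with h | h
          · rcases (Sym2.eq_iff).1 h with ⟨-, h2'⟩ | ⟨h1', -⟩
            · exact h2'
            · exact absurd h1' hadj.ne
          · exact absurd (huM' _ h) (by simp)
        have hnotmem : s(u, v) ∉ M' := fun hmem => huM' _ hmem (by simp)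
        simp only [hvex]
        congr 1
        exact Finset.erase_insert hnotmem
      · -- summand equality
        intro M hM
        have hMW' := mem_mSet.1 (Finset.mem_filter.1 hM).1
        obtain ⟨e, he, hue⟩ := (Finset.mem_filter.1 hM).2
        obtain ⟨w, rfl⟩ := Sym2.mem_iff_exists.1 hue
        have hex : ∃ v, s(u, v) ∈ M := ⟨w, he⟩
        have hsel : s(u, extractV u M) ∈ M := by
          rw [extractV, dif_pos hex]; exact hex.choose_spec
        set v0 := extractV u M with hv0
        have hadj : G.Adj u v0 := (SimpleGraph.mem_edgeSet G).1 (hMW'.1 _ hsel)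
        have hcard : M.card = (M.erase s(u, v0)).card + 1 :=
          (Finset.card_erase_add_one hsel).symm
        have huncs : unc W M = unc ((W.erase u).erase v0) (M.erase s(u, v0)) := by
          ext z
          simp only [unc, Finset.mem_filter, Finset.mem_erase]
          constructor
          · rintro ⟨hzW, h⟩
            have hzu : z ≠ u := by rintro rfl; exact h _ hsel (by simp)
            have hzv : z ≠ v0 := by rintro rfl; exact h _ hsel (by simp)
            exact ⟨⟨hzv, hzu, hzW⟩, fun f hf => h f hf.2⟩
          · rintro ⟨⟨hzv, hzu, hzW⟩, h⟩
            refine ⟨hzW, fun f hf hzf => ?_⟩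
            by_cases hfe : f = s(u, v0)
            · subst hfe
              rcases Sym2.mem_iff.1 hzf with rfl | rfl
              · exact hzu rfl
              · exact hzv rfl
            · exact h f ⟨hfe, hf⟩ hzf
        rw [hcard, huncs, pow_succ]
        ring
    rw [key, Finset.sum_sigma]
    rw [← Finset.sum_neg_distrib]
    refine Finset.sum_congr rfl fun v hv => ?_
    rw [pE, Finset.sum_neg_distrib]
  rw [pE, hsplit, Finset.sum_union hdisj, hA, hPartA, hPartB]
  ring

/-- edge recursion -/
lemma pE_edge (a b : V) (hab : G.Adj a b) (ha : a ∈ W) (hb : b ∈ W) (x : ℝ) :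
    pE G W x = pE (G.deleteEdges {s(a, b)}) W x - pE G ((W.erase a).erase b) x := by
  classical
  have hsplit : mSet G W = (mSet G W).filter (fun M => s(a, b) ∉ M) ∪
      (mSet G W).filter (fun M => s(a, b) ∈ M) := by
    rw [← Finset.filter_or]
    refine (Finset.filter_true_of_mem fun M _ => ?_).symm
    tauto
  have hdisj : Disjoint ((mSet G W).filter (fun M => s(a, b) ∉ M))
      ((mSet G W).filter (fun M => s(a, b) ∈ M)) := by
    rw [Finset.disjoint_left]
    intro M h1 h2
    exact (Finset.mem_filter.1 h1).2 (Finset.mem_filter.1 h2).2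
  have hA : (mSet G W).filter (fun M => s(a, b) ∉ M) = mSet (G.deleteEdges {s(a, b)}) W := by
    ext M
    simp only [Finset.mem_filter, mem_mSet, isM, SimpleGraph.edgeSet_deleteEdges,
      Set.mem_diff, Set.mem_singleton_iff]
    constructor
    · rintro ⟨⟨h1, h2, h3⟩, h4⟩
      exact ⟨fun e he => ⟨h1 e he, fun hh => h4 (hh ▸ he)⟩, h2, h3⟩
    · rintro ⟨h1, h2, h3⟩
      exact ⟨⟨fun e he => (h1 e he).1, h2, h3⟩, fun hmem => (h1 _ hmem).2 rfl⟩
  have hPartA : ∑ M ∈ mSet (G.deleteEdges {s(a, b)}) W, (-1 : ℝ) ^ M.card * x ^ (unc W M).card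
      = pE (G.deleteEdges {s(a, b)}) W x := rfl
  have hPartB : ∑ M ∈ (mSet G W).filter (fun M => s(a, b) ∈ M),
      (-1 : ℝ) ^ M.card * x ^ (unc W M).card = - pE G ((W.erase a).erase b) x := by
    rw [pE, ← Finset.sum_neg_distrib]
    refine Finset.sum_nbij' (i := fun M => M.erase s(a, b)) (j := fun M' => insert s(a, b) M')
      ?_ ?_ ?_ ?_ ?_
    · intro M hM
      have hMW := mem_mSet.1 (Finset.mem_filter.1 hM).1
      have hsel := (Finset.mem_filter.1 hM).2
      rw [mem_mSet]
      refine ⟨fun f hf => hMW.1 f (Finset.mem_of_mem_erase hf), ?_, ?_⟩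
      · intro f hf z hz
        have hfM : f ∈ M := Finset.mem_of_mem_erase hf
        have hfe : f ≠ s(a, b) := Finset.ne_of_mem_erase hf
        have hdisjf := hMW.2.2 _ hsel f hfM (Ne.symm hfe)
        refine Finset.mem_erase.2 ⟨?_, Finset.mem_erase.2 ⟨?_, hMW.2.1 f hfM z hz⟩⟩
        · rintro rfl; exact hdisjf _ (by simp) hz
        · rintro rfl; exact hdisjf _ (by simp) hz
      · exact fun f hf g hg hfg => hMW.2.2 f (Finset.mem_of_mem_erase hf) g
          (Finset.mem_of_mem_erase hg) hfg
    · intro M' hM'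
      have hM'W := mem_mSet.1 hM'
      have hnab : ∀ f ∈ M', ∀ z ∈ f, z ≠ a ∧ z ≠ b := by
        intro f hf z hz
        have := hM'W.2.1 f hf z hz
        exact ⟨(Finset.mem_erase.1 (Finset.mem_erase.1 this).2).1, (Finset.mem_erase.1 this).1⟩
      simp only [Finset.mem_filter, mem_mSet]
      refine ⟨⟨?_, ?_, ?_⟩, Finset.mem_insert_self _ _⟩
      · intro e he
        rcases Finset.mem_insert.1 he with rfl | he
        · exact (SimpleGraph.mem_edgeSet G).2 hab
        · exact hM'W.1 e he
      · intro e he z hz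
        rcases Finset.mem_insert.1 he with rfl | he
        · rcases Sym2.mem_iff.1 hz with rfl | rfl
          · exact ha
          · exact hb
        · exact Finset.mem_of_mem_erase (Finset.mem_of_mem_erase (hM'W.2.1 e he z hz))
      · intro e he f hf hef z hze hzf
        rcases Finset.mem_insert.1 he with rfl | he
        · rcases Finset.mem_insert.1 hf with rfl | hf
          · exact hef rfl
          · rcases Sym2.mem_iff.1 hze with h | h
            · exact absurd h (hnab f hf z hzf).1
            · exact absurd h (hnab f hf z hzf).2
        · rcases Finset.mem_insert.1 hf with rfl | hf
          · rcases Sym2.mem_iff.1 hzf with h | h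
            · exact absurd h (hnab e he z hze).1
            · exact absurd h (hnab e he z hze).2
          · exact hM'W.2.2 e he f hf hef z hze hzf
    · intro M hM
      exact Finset.insert_erase (Finset.mem_filter.1 hM).2
    · intro M' hM'
      have hM'W := mem_mSet.1 hM'
      have : s(a, b) ∉ M' := by
        intro hmem
        have := hM'W.2.1 _ hmem a (by simp)
        exact (Finset.mem_erase.1 (Finset.mem_erase.1 this).2).1 rfl
      exact Finset.erase_insert this
    · intro M hM
      have hMW := mem_mSet.1 (Finset.mem_filter.1 hM).1
      have hsel := (Finset.mem_filter.1 hM).2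
      have hcard : M.card = (M.erase s(a, b)).card + 1 := (Finset.card_erase_add_one hsel).symm
      have huncs : unc W M = unc ((W.erase a).erase b) (M.erase s(a, b)) := by
        ext z
        simp only [unc, Finset.mem_filter, Finset.mem_erase]
        constructor
        · rintro ⟨hzW, h⟩
          have hza : z ≠ a := by rintro rfl; exact h _ hsel (by simp)
          have hzb : z ≠ b := by rintro rfl; exact h _ hsel (by simp)
          exact ⟨⟨hzb, hza, hzW⟩, fun f hf => h f hf.2⟩
        · rintro ⟨⟨hzb, hza, hzW⟩, h⟩
          refine ⟨hzW, fun f hf hzf => ?_⟩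
          by_cases hfe : f = s(a, b)
          · subst hfe
            rcases Sym2.mem_iff.1 hzf with rfl | rfl
            · exact hza rfl
            · exact hzb rfl
          · exact h f ⟨hfe, hf⟩ hzf
      rw [hcard, huncs, pow_succ]
      ring
  rw [pE, hsplit, Finset.sum_union hdisj, hA, hPartA, hPartB]
  ring

/-- product formula for supports with no edges in between -/
lemma pE_mul (A B : Finset V) (hAB : Disjoint A B)
    (hnoedge : ∀ a ∈ A, ∀ b ∈ B, ¬G.Adj a b) (x : ℝ) :
    pE G (A ∪ B) x = pE G A x * pE G B x := by
  classical
  have hside : ∀ M ∈ mSet G (A ∪ B), ∀ e ∈ M, (∀ v ∈ e, v ∈ A) ∨ (∀ v ∈ e, v ∈ B) := by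
    intro M hM e he
    have hMW := mem_mSet.1 hM
    induction e using Sym2.ind with
    | _ p q =>
      have hadj : G.Adj p q := (SimpleGraph.mem_edgeSet G).1 (hMW.1 _ he)
      have hp := hMW.2.1 _ he p (by simp)
      have hq := hMW.2.1 _ he q (by simp)
      rcases Finset.mem_union.1 hp with hpA | hpB
      · rcases Finset.mem_union.1 hq with hqA | hqB
        · left; intro v hv; rcases Sym2.mem_iff.1 hv with rfl | rfl <;> assumption
        · exact absurd hadj (hnoedge p hpA q hqB)
      · rcases Finset.mem_union.1 hq with hqA | hqB
        · exact absurd hadj.symm (hnoedge q hqA p hpB)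
        · right; intro v hv; rcases Sym2.mem_iff.1 hv with rfl | rfl <;> assumption
  rw [pE, pE, pE, Finset.sum_mul_sum]
  rw [← Finset.sum_product']
  refine Finset.sum_nbij' (i := fun M => (M.filter (fun e => ∀ v ∈ e, v ∈ A),
      M.filter (fun e => ∀ v ∈ e, v ∈ B)))
    (j := fun p => p.1 ∪ p.2) ?_ ?_ ?_ ?_ ?_
  · intro M hM
    have hMW := mem_mSet.1 hM
    simp only [Finset.mem_product, mem_mSet]
    constructor
    · exact ⟨fun e he => hMW.1 e (Finset.mem_filter.1 he).1,
        fun e he => (Finset.mem_filter.1 he).2,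
        fun e he f hf => hMW.2.2 e (Finset.mem_filter.1 he).1 f (Finset.mem_filter.1 hf).1⟩
    · exact ⟨fun e he => hMW.1 e (Finset.mem_filter.1 he).1,
        fun e he => (Finset.mem_filter.1 he).2,
        fun e he f hf => hMW.2.2 e (Finset.mem_filter.1 he).1 f (Finset.mem_filter.1 hf).1⟩
  · rintro ⟨MA, MB⟩ hp
    rw [Finset.mem_product] at hp
    obtain ⟨hA, hB⟩ := hp
    have hAW := mem_mSet.1 hA
    have hBW := mem_mSet.1 hB
    rw [mem_mSet]
    have hcross : ∀ e ∈ MA, ∀ f ∈ MB, ∀ z : V, z ∈ e → z ∉ f := by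
      intro e he f hf z hze hzf
      have hzA := hAW.2.1 e he z hze
      have hzB := hBW.2.1 f hf z hzf
      exact Finset.disjoint_left.1 hAB hzA hzB
    refine ⟨?_, ?_, ?_⟩
    · intro e he
      rcases Finset.mem_union.1 he with he | he
      · exact hAW.1 e he
      · exact hBW.1 e he
    · intro e he z hz
      rcases Finset.mem_union.1 he with he | he
      · exact Finset.mem_union_left _ (hAW.2.1 e he z hz)
      · exact Finset.mem_union_right _ (hBW.2.1 e he z hz)
    · intro e he f hf hef z hze hzf
      rcases Finset.mem_union.1 he with he | he <;> rcases Finset.mem_union.1 hf with hf | hf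
      · exact hAW.2.2 e he f hf hef z hze hzf
      · exact hcross e he f hf z hze hzf
      · exact hcross f hf e he z hzf hze
      · exact hBW.2.2 e he f hf hef z hze hzf
  · intro M hM
    have hM2 := hside M hM
    ext e
    simp only [Finset.mem_union, Finset.mem_filter]
    constructor
    · rintro (⟨he, -⟩ | ⟨he, -⟩) <;> exact he
    · intro he
      rcases hM2 e he with h | h
      · exact Or.inl ⟨he, h⟩
      · exact Or.inr ⟨he, h⟩
  · rintro ⟨MA, MB⟩ hp
    rw [Finset.mem_product] at hp
    obtain ⟨hA, hB⟩ := hp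
    have hAW := mem_mSet.1 hA
    have hBW := mem_mSet.1 hB
    have edgeA : ∀ e ∈ MA, ∀ v ∈ e, v ∈ A := fun e he => hAW.2.1 e he
    have edgeB : ∀ e ∈ MB, ∀ v ∈ e, v ∈ B := fun e he => hBW.2.1 e he
    have hAnotB : ∀ e ∈ MA, ¬∀ v ∈ e, v ∈ B := by
      intro e he h
      induction e using Sym2.ind with
      | _ p q =>
        exact Finset.disjoint_left.1 hAB (edgeA _ he p (by simp)) (h p (by simp))
    have hBnotA : ∀ e ∈ MB, ¬∀ v ∈ e, v ∈ A := by
      intro e he h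
      induction e using Sym2.ind with
      | _ p q =>
        exact Finset.disjoint_left.1 hAB (h p (by simp)) (edgeB _ he p (by simp))
    have h1 : (MA ∪ MB).filter (fun e => ∀ v ∈ e, v ∈ A) = MA := by
      ext e
      simp only [Finset.mem_filter, Finset.mem_union]
      constructor
      · rintro ⟨he | he, h⟩
        · exact he
        · exact absurd h (hBnotA e he)
      · intro he; exact ⟨Or.inl he, edgeA e he⟩
    have h2 : (MA ∪ MB).filter (fun e => ∀ v ∈ e, v ∈ B) = MB := by
      ext e
      simp only [Finset.mem_filter, Finset.mem_union]
      constructor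
      · rintro ⟨he | he, h⟩
        · exact absurd h (hAnotB e he)
        · exact he
      · intro he; exact ⟨Or.inr he, edgeB e he⟩
    simp only [h1, h2]
  · intro M hM
    have hM2 := hside M hM
    set MA := M.filter (fun e => ∀ v ∈ e, v ∈ A) with hMA
    set MB := M.filter (fun e => ∀ v ∈ e, v ∈ B) with hMB
    have hMunion : M = MA ∪ MB := by
      ext e
      simp only [hMA, hMB, Finset.mem_union, Finset.mem_filter]
      constructor
      · intro he
        rcases hM2 e he with h | h
        · exact Or.inl ⟨he, h⟩
        · exact Or.inr ⟨he, h⟩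
      · rintro (⟨he, -⟩ | ⟨he, -⟩) <;> exact he
    have hMdisj : Disjoint MA MB := by
      rw [Finset.disjoint_left]
      intro e heA heB
      obtain ⟨-, hA'⟩ := Finset.mem_filter.1 heA
      obtain ⟨-, hB'⟩ := Finset.mem_filter.1 heB
      induction e using Sym2.ind with
      | _ p q =>
        exact Finset.disjoint_left.1 hAB (hA' p (by simp)) (hB' p (by simp))
    have hcard : M.card = MA.card + MB.card := by
      conv_lhs => rw [hMunion]
      exact Finset.card_union_of_disjoint hMdisj
    have huncU : unc (A ∪ B) M = unc A MA ∪ unc B MB := by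
      ext v
      simp only [unc, Finset.mem_filter, Finset.mem_union, hMA, hMB]
      constructor
      · rintro ⟨hv | hv, h⟩
        · exact Or.inl ⟨hv, fun e he => h e he.1⟩
        · exact Or.inr ⟨hv, fun e he => h e he.1⟩
      · rintro (⟨hv, h⟩ | ⟨hv, h⟩)
        · refine ⟨Or.inl hv, fun e he hve => ?_⟩
          rcases hM2 e he with hs | hs
          · exact h e ⟨he, hs⟩ hve
          · exact Finset.disjoint_left.1 hAB hv (hs v hve)
        · refine ⟨Or.inr hv, fun e he hve => ?_⟩
          rcases hM2 e he with hs | hs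
          · exact Finset.disjoint_left.1 hAB (hs v hve) hv
          · exact h e ⟨he, hs⟩ hve
    have huncdisj : Disjoint (unc A MA) (unc B MB) := by
      rw [Finset.disjoint_left]
      intro v h1 h2
      exact Finset.disjoint_left.1 hAB (Finset.mem_filter.1 h1).1 (Finset.mem_filter.1 h2).1
    have huc : (unc (A ∪ B) M).card = (unc A MA).card + (unc B MB).card := by
      rw [huncU, Finset.card_union_of_disjoint huncdisj]
    rw [hcard, huc, pow_add, pow_add]
    ring


/-! ### Analysis -/

def rootSet (G : SimpleGraph V) (W : Finset V) : Set ℝ := {x : ℝ | pE G W x = 0}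

noncomputable def tt (G : SimpleGraph V) (W : Finset V) : ℝ := sSup (rootSet G W)

lemma continuous_pE : Continuous (pE G W) := by
  unfold pE
  exact continuous_finset_sum _ fun M _ => continuous_const.mul (continuous_pow _)

lemma empty_mem_mSet : (∅ : Finset (Sym2 V)) ∈ mSet G W := by
  simp [mem_mSet, isM]

lemma unc_empty_matching : unc W (∅ : Finset (Sym2 V)) = W := by
  simp [unc]

lemma mSet_empty : mSet G (∅ : Finset V) = {∅} := by
  classical
  ext M
  simp only [mem_mSet, Finset.mem_singleton]
  constructor
  · rintro ⟨h1, h2, h3⟩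
    by_contra hM
    obtain ⟨e, he⟩ := Finset.nonempty_iff_ne_empty.2 hM
    induction e using Sym2.ind with
    | _ a b => exact absurd (h2 _ he a (by simp)) (by simp)
  · rintro rfl; exact ⟨by simp, by simp, by simp⟩

lemma pE_empty (x : ℝ) : pE G (∅ : Finset V) x = 1 := by
  simp [pE, mSet_empty, unc]

lemma mSet_singleton (u : V) : mSet G ({u} : Finset V) = {∅} := by
  classical
  ext M
  simp only [mem_mSet, Finset.mem_singleton]
  constructor
  · rintro ⟨h1, h2, h3⟩
    by_contra hM
    obtain ⟨e, he⟩ := Finset.nonempty_iff_ne_empty.2 hM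
    induction e using Sym2.ind with
    | _ a b =>
      have hadj : G.Adj a b := (SimpleGraph.mem_edgeSet G).1 (h1 _ he)
      have ha := Finset.mem_singleton.1 (h2 _ he a (by simp))
      have hb := Finset.mem_singleton.1 (h2 _ he b (by simp))
      exact hadj.ne (ha.trans hb.symm)
  · rintro rfl; exact ⟨by simp, by simp, by simp⟩

lemma pE_singleton (u : V) (x : ℝ) : pE G ({u} : Finset V) x = x := by
  simp [pE, mSet_singleton, unc_empty_matching]

lemma pE_pos_of_ge {x : ℝ} (hx1 : 1 ≤ x) (hxC : ((mSet G W).card : ℝ) ≤ x) :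
    0 < pE G W x := by
  classical
  have hx0 : (0 : ℝ) < x := lt_of_lt_of_le zero_lt_one hx1
  have h0 : (∅ : Finset (Sym2 V)) ∈ mSet G W := empty_mem_mSet
  rw [pE, ← Finset.add_sum_erase _ _ h0]
  simp only [Finset.card_empty, pow_zero, one_mul, unc_empty_matching]
  rcases Finset.eq_empty_or_nonempty ((mSet G W).erase ∅) with he | he
  · rw [he, Finset.sum_empty, add_zero]
    positivity
  · obtain ⟨M0, hM0⟩ := he
    have hM0ne : M0 ≠ ∅ := Finset.ne_of_mem_erase hM0
    have hM0m : isM G W M0 := mem_mSet.1 (Finset.mem_of_mem_erase hM0)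
    have hn2 : 2 ≤ W.card := le_trans
      (by have := Finset.card_pos.2 (Finset.nonempty_iff_ne_empty.2 hM0ne); omega)
      (two_mul_card_le hM0m)
    have hbound : ∀ M ∈ (mSet G W).erase ∅,
        -(x ^ (W.card - 2)) ≤ (-1 : ℝ) ^ M.card * x ^ (unc W M).card := by
      intro M hM
      have hMne : M ≠ ∅ := Finset.ne_of_mem_erase hM
      have hMm : isM G W M := mem_mSet.1 (Finset.mem_of_mem_erase hM)
      have hcard : (unc W M).card ≤ W.card - 2 := by
        rw [card_unc hMm]
        have : 1 ≤ M.card := Finset.card_pos.2 (Finset.nonempty_iff_ne_empty.2 hMne)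
        omega
      have hpow : x ^ (unc W M).card ≤ x ^ (W.card - 2) := pow_le_pow_right₀ hx1 hcard
      have hpos : (0 : ℝ) ≤ x ^ (unc W M).card := le_of_lt (pow_pos hx0 _)
      rcases Int.even_or_odd M.card with h | h
      all_goals {
        first
        | (rw [(Even.neg_one_pow (by exact_mod_cast h) : (-1:ℝ)^M.card = 1), one_mul]
           linarith)
        | (rw [(Odd.neg_one_pow (by exact_mod_cast h) : (-1:ℝ)^M.card = -1), neg_one_mul]
           linarith) }
    have hsum : -((((mSet G W).card : ℝ) - 1) * x ^ (W.card - 2)) ≤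
        ∑ M ∈ (mSet G W).erase ∅, (-1 : ℝ) ^ M.card * x ^ (unc W M).card := by
      have := Finset.sum_le_sum (s := (mSet G W).erase ∅)
        (f := fun M => -(x ^ (W.card - 2)))
        (g := fun M => (-1 : ℝ) ^ M.card * x ^ (unc W M).card) hbound
      rw [Finset.sum_const, Finset.card_erase_of_mem h0] at this
      have h1c : 1 ≤ (mSet G W).card := Finset.card_pos.2 ⟨∅, h0⟩
      have hcerase : (((mSet G W).card - 1 : ℕ) : ℝ) = ((mSet G W).card : ℝ) - 1 := by
        push_cast [h1c]
        ring
      rw [nsmul_eq_mul, hcerase] at this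
      linarith
    have hxn : x ^ W.card = x ^ (W.card - 2) * x ^ 2 := by
      rw [← pow_add]
      congr 1
      omega
    have hp2 : (0:ℝ) < x ^ (W.card - 2) := pow_pos hx0 _
    have hxx : x ≤ x ^ 2 := by nlinarith
    have h1 : (((mSet G W).card : ℝ) - 1) * x ^ (W.card - 2) ≤ (x - 1) * x ^ (W.card - 2) :=
      mul_le_mul_of_nonneg_right (by linarith) (le_of_lt hp2)
    have h2 : (0:ℝ) ≤ (x ^ 2 - x) * x ^ (W.card - 2) :=
      mul_nonneg (by linarith) (le_of_lt hp2)
    nlinarith [hsum, hxn, hp2, h1, h2]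


lemma bddAbove_rootSet : BddAbove (rootSet G W) := by
  refine ⟨max 1 ((mSet G W).card : ℝ), fun y hy => ?_⟩
  by_contra h
  push_neg at h
  have h1 : 1 ≤ y := le_of_lt (lt_of_le_of_lt (le_max_left _ _) h)
  have h2 : ((mSet G W).card : ℝ) ≤ y := le_of_lt (lt_of_le_of_lt (le_max_right _ _) h)
  exact absurd hy (ne_of_gt (pE_pos_of_ge h1 h2))

lemma isClosed_rootSet : IsClosed (rootSet G W) :=
  isClosed_singleton.preimage (continuous_pE (G := G) (W := W))

lemma tt_mem_rootSet (h : (rootSet G W).Nonempty) : tt G W ∈ rootSet G W :=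
  IsClosed.csSup_mem isClosed_rootSet h bddAbove_rootSet

lemma pE_tt (h : (rootSet G W).Nonempty) : pE G W (tt G W) = 0 := tt_mem_rootSet h

lemma le_tt {y : ℝ} (hy : y ∈ rootSet G W) : y ≤ tt G W :=
  le_csSup bddAbove_rootSet hy

lemma pE_pos_of_lt {x : ℝ} (hx : tt G W < x) : 0 < pE G W x := by
  by_contra h
  push_neg at h
  rcases eq_or_lt_of_le h with heq | hlt
  · exact absurd (le_tt (show x ∈ rootSet G W from heq)) (not_le.2 hx)
  · set y := max x (max 1 ((mSet G W).card : ℝ)) + 1 with hy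
    have hxy : x ≤ y := le_trans (le_max_left _ _) (by linarith [le_refl y])
    have hy1 : 1 ≤ y := by
      have := le_max_left (1:ℝ) ((mSet G W).card : ℝ)
      have := le_max_right x (max 1 ((mSet G W).card : ℝ))
      simp only [hy]
      nlinarith [le_max_left (1:ℝ) ((mSet G W).card : ℝ),
        le_max_right x (max 1 ((mSet G W).card : ℝ))]
    have hyC : ((mSet G W).card : ℝ) ≤ y := by
      nlinarith [le_max_right (1:ℝ) ((mSet G W).card : ℝ),
        le_max_right x (max 1 ((mSet G W).card : ℝ))]
    have hposy : 0 < pE G W y := pE_pos_of_ge hy1 hyC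
    have hmem : (0 : ℝ) ∈ Set.Icc (pE G W x) (pE G W y) := ⟨le_of_lt hlt, le_of_lt hposy⟩
    obtain ⟨z, hz, hz0⟩ := intermediate_value_Icc hxy (continuous_pE.continuousOn) hmem
    have : z ≤ tt G W := le_tt hz0
    have : x ≤ z := hz.1
    linarith

lemma pE_nonneg_of_le {x : ℝ} (hx : tt G W ≤ x) : 0 ≤ pE G W x := by
  rcases eq_or_lt_of_le hx with heq | hlt
  · rcases Set.eq_empty_or_nonempty (rootSet G W) with hre | hrn
    · have h0 : tt G W = 0 := by unfold tt; rw [hre]; exact Real.sSup_empty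
      have : 0 < pE G W (x + 1) := pE_pos_of_lt (by rw [← heq, h0]; linarith)
      by_contra h
      push_neg at h
      obtain ⟨z, hz, hz0⟩ := intermediate_value_Icc (by linarith : x ≤ x + 1)
        (continuous_pE.continuousOn) (Set.mem_Icc.2 ⟨le_of_lt h, le_of_lt this⟩)
      exact (Set.eq_empty_iff_forall_notMem.1 hre z) hz0
    · rw [← heq, pE_tt hrn]
  · exact le_of_lt (pE_pos_of_lt hlt)

lemma pE_neg_eq (x : ℝ) : pE G W (-x) = (-1 : ℝ) ^ W.card * pE G W x := by
  classical
  rw [pE, pE, Finset.mul_sum]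
  refine Finset.sum_congr rfl fun M hM => ?_
  have hMm : isM G W M := mem_mSet.1 hM
  have hW : W.card = (unc W M).card + 2 * M.card := by
    rw [card_unc hMm]
    have := two_mul_card_le hMm
    omega
  rw [neg_pow x, hW, pow_add, pow_mul, neg_one_sq, one_pow, mul_one]
  ring

lemma tt_nonneg : 0 ≤ tt G W := by
  rcases Set.eq_empty_or_nonempty (rootSet G W) with hre | hrn
  · unfold tt; rw [hre]; rw [Real.sSup_empty]
  · obtain ⟨y, hy⟩ := hrn
    have hy' : -y ∈ rootSet G W := by
      have : pE G W (-y) = (-1 : ℝ) ^ W.card * pE G W y := pE_neg_eq y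
      simp only [rootSet, Set.mem_setOf_eq] at hy ⊢
      rw [this, hy, mul_zero]
    rcases le_or_gt 0 y with h | h
    · exact le_trans h (le_tt hy)
    · exact le_trans (by linarith) (le_tt hy')


lemma exists_root_ge {x : ℝ} (hx : pE G W x ≤ 0) : ∃ r, r ∈ rootSet G W ∧ x ≤ r := by
  rcases eq_or_lt_of_le hx with heq | hlt
  · exact ⟨x, heq, le_refl x⟩
  · set y := max x (max 1 ((mSet G W).card : ℝ)) + 1 with hy
    have hxy : x ≤ y := by
      have := le_max_left x (max 1 ((mSet G W).card : ℝ)); linarith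
    have hy1 : 1 ≤ y := by
      have h1 := le_max_left (1:ℝ) ((mSet G W).card : ℝ)
      have h2 := le_max_right x (max 1 ((mSet G W).card : ℝ))
      linarith
    have hyC : ((mSet G W).card : ℝ) ≤ y := by
      have h1 := le_max_right (1:ℝ) ((mSet G W).card : ℝ)
      have h2 := le_max_right x (max 1 ((mSet G W).card : ℝ))
      linarith
    have hposy : 0 < pE G W y := pE_pos_of_ge hy1 hyC
    obtain ⟨z, hz, hz0⟩ := intermediate_value_Icc hxy (continuous_pE.continuousOn)
      (Set.mem_Icc.2 ⟨le_of_lt hlt, le_of_lt hposy⟩)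
    exact ⟨z, hz0, hz.1⟩

lemma rootSet_empty_support : rootSet G (∅ : Finset V) = ∅ := by
  ext x
  simp [rootSet, pE_empty]

lemma tt_empty_support : tt G (∅ : Finset V) = 0 := by
  unfold tt; rw [rootSet_empty_support]; exact Real.sSup_empty

lemma main_ab : ∀ n : ℕ, ∀ W : Finset V, W.card = n →
    (W.Nonempty → (rootSet G W).Nonempty) ∧ (∀ u ∈ W, tt G (W.erase u) ≤ tt G W) := by
  intro n
  induction n using Nat.strong_induction_on with
  | _ n ih =>
    intro W hWn
    have key : ∀ u ∈ W, ∃ r, r ∈ rootSet G W ∧ tt G (W.erase u) ≤ r := by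
      intro u hu
      rcases Finset.eq_empty_or_nonempty (W.erase u) with hS | hS
      · -- W = {u}
        have hWu : W = {u} := by
          apply Finset.eq_singleton_iff_unique_mem.2
          refine ⟨hu, fun v hv => ?_⟩
          by_contra hne
          have : v ∈ W.erase u := Finset.mem_erase.2 ⟨hne, hv⟩
          rw [hS] at this
          exact absurd this (Finset.notMem_empty v)
        refine ⟨0, ?_, ?_⟩
        · show pE G W 0 = 0
          rw [hWu, pE_singleton]
        · rw [hS, tt_empty_support]
      · set S := W.erase u with hSdef
        have hScard : S.card = n - 1 := by rw [hSdef, Finset.card_erase_of_mem hu, hWn]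
        have hn1 : 1 ≤ n := by rw [← hWn]; exact Finset.card_pos.2 ⟨u, hu⟩
        have ihS := ih (n - 1) (by omega) S hScard
        have hrootS : (rootSet G S).Nonempty := ihS.1 hS
        set θ := tt G S with hθ
        have hθ0 : pE G S θ = 0 := pE_tt hrootS
        have hval : pE G W θ ≤ 0 := by
          rw [pE_rec u hu θ, ← hSdef, hθ0, mul_zero, zero_sub, neg_nonpos]
          refine Finset.sum_nonneg fun v hv => ?_
          have hvS : v ∈ S := (Finset.mem_filter.1 hv).1
          have : tt G (S.erase v) ≤ tt G S := ihS.2 v hvS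
          exact pE_nonneg_of_le (le_trans this (le_refl θ))
        obtain ⟨r, hr, hθr⟩ := exists_root_ge hval
        exact ⟨r, hr, hθr⟩
    constructor
    · rintro ⟨u, hu⟩
      obtain ⟨r, hr, -⟩ := key u hu
      exact ⟨r, hr⟩
    · intro u hu
      obtain ⟨r, hr, hθr⟩ := key u hu
      exact le_trans hθr (le_tt hr)

lemma roots_nonempty (hW : W.Nonempty) : (rootSet G W).Nonempty :=
  (main_ab W.card W rfl).1 hW

lemma tt_erase_le {u : V} (hu : u ∈ W) : tt G (W.erase u) ≤ tt G W :=
  (main_ab W.card W rfl).2 u hu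

lemma tt_subset_le : ∀ n : ℕ, ∀ W T : Finset V, W.card ≤ n → T ⊆ W → tt G T ≤ tt G W := by
  intro n
  induction n with
  | zero =>
    intro W T hc hTW
    have hW : W = ∅ := Finset.card_eq_zero.1 (le_antisymm hc (Nat.zero_le _))
    have hT : T = ∅ := Finset.subset_empty.1 (hW ▸ hTW)
    rw [hW, hT]
  | succ n ihn =>
    intro W T hc hTW
    by_cases h : T = W
    · rw [h]
    · obtain ⟨u, huW, huT⟩ := Finset.exists_of_ssubset (lt_of_le_of_ne hTW h)
      have hsub : T ⊆ W.erase u := Finset.subset_erase.2 ⟨hTW, huT⟩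
      have h1 : tt G T ≤ tt G (W.erase u) := by
        refine ihn (W.erase u) T ?_ hsub
        rw [Finset.card_erase_of_mem huW]
        omega
      exact le_trans h1 (tt_erase_le huW)

lemma tt_mono {T : Finset V} (h : T ⊆ W) : tt G T ≤ tt G W :=
  tt_subset_le W.card W T (le_refl _) h


/-! ### Connectivity on a support -/

def Rw (G : SimpleGraph V) (S : Finset V) : V → V → Prop :=
  fun a b => G.Adj a b ∧ a ∈ S ∧ b ∈ S

def ReachIn (G : SimpleGraph V) (S : Finset V) : V → V → Prop :=
  Relation.ReflTransGen (Rw G S)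

def ConnOn (G : SimpleGraph V) (S : Finset V) : Prop :=
  ∀ a ∈ S, ∀ b ∈ S, ReachIn G S a b

lemma rw_symm {S : Finset V} : Symmetric (Rw G S) :=
  fun _ _ h => ⟨h.1.symm, h.2.2, h.2.1⟩

lemma reachIn_symm {S : Finset V} {a b : V} (h : ReachIn G S a b) : ReachIn G S b a :=
  by
  induction h with
  | refl => exact Relation.ReflTransGen.refl
  | tail _ hbc ih => exact Relation.ReflTransGen.head (rw_symm hbc) ih

lemma reachIn_trans {S : Finset V} {a b c : V} (h1 : ReachIn G S a b) (h2 : ReachIn G S b c) :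
    ReachIn G S a c := Relation.ReflTransGen.trans h1 h2

def restrictG (G : SimpleGraph V) (S : Finset V) : SimpleGraph V where
  Adj := Rw G S
  symm := ⟨fun _ _ h => ⟨h.1.symm, h.2.2, h.2.1⟩⟩
  loopless := ⟨fun a h => G.loopless.irrefl a h.1⟩

lemma reachIn_iff_reachable {S : Finset V} {a b : V} :
    ReachIn G S a b ↔ (restrictG G S).Reachable a b := by
  rw [SimpleGraph.reachable_iff_reflTransGen]
  rfl

/-- components -/
noncomputable def comp (G : SimpleGraph V) (S : Finset V) (u : V) : Finset V :=
  S.filter (fun w => ReachIn G S u w)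

lemma comp_subset {S : Finset V} {u : V} : comp G S u ⊆ S := Finset.filter_subset _ _

lemma mem_comp_self {S : Finset V} {u : V} (hu : u ∈ S) : u ∈ comp G S u :=
  Finset.mem_filter.2 ⟨hu, Relation.ReflTransGen.refl⟩

lemma comp_no_edge {S : Finset V} {u a b : V} (ha : a ∈ comp G S u)
    (hb : b ∈ S \ comp G S u) : ¬G.Adj a b := by
  intro hadj
  obtain ⟨haS, hreach⟩ := Finset.mem_filter.1 ha
  obtain ⟨hbS, hbnc⟩ := Finset.mem_sdiff.1 hb
  exact hbnc (Finset.mem_filter.2 ⟨hbS,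
    Relation.ReflTransGen.tail hreach ⟨hadj, haS, hbS⟩⟩)

lemma reachIn_comp {S : Finset V} {u w : V} (h : ReachIn G S u w) :
    ReachIn G (comp G S u) u w := by
  induction h with
  | refl => exact Relation.ReflTransGen.refl
  | tail hub step ih =>
    rename_i b c
    have hbS : b ∈ S := step.2.1
    have hcS : c ∈ S := step.2.2
    have hb : b ∈ comp G S u := Finset.mem_filter.2 ⟨hbS, hub⟩
    have hc : c ∈ comp G S u := Finset.mem_filter.2 ⟨hcS,
      Relation.ReflTransGen.tail hub step⟩
    exact Relation.ReflTransGen.tail ih ⟨step.1, hb, hc⟩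

lemma connOn_comp {S : Finset V} {u : V} (hu : u ∈ S) : ConnOn G (comp G S u) := by
  intro a ha b hb
  have h1 : ReachIn G (comp G S u) u a := reachIn_comp (Finset.mem_filter.1 ha).2
  have h2 : ReachIn G (comp G S u) u b := reachIn_comp (Finset.mem_filter.1 hb).2
  exact reachIn_trans (reachIn_symm h1) h2

lemma pE_comp_split {S : Finset V} {u : V} (hu : u ∈ S) (x : ℝ) :
    pE G S x = pE G (comp G S u) x * pE G (S \ comp G S u) x := by
  have hun : comp G S u ∪ (S \ comp G S u) = S := Finset.union_sdiff_of_subset comp_subset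
  have h := pE_mul (G := G) (comp G S u) (S \ comp G S u) Finset.disjoint_sdiff
    (fun a ha b hb => comp_no_edge ha hb) x
  rw [hun] at h
  exact h

lemma walk_to_reachIn {S : Finset V} {u : V} {a b : V} (p : (restrictG G S).Walk a b)
    (hsup : u ∉ p.support) : ReachIn G (S.erase u) a b := by
  induction p with
  | nil => exact Relation.ReflTransGen.refl
  | @cons v c z hadj q ih =>
    rw [SimpleGraph.Walk.support_cons, List.mem_cons] at hsup
    push_neg at hsup
    obtain ⟨hneva, hq⟩ := hsup
    have hnec : u ≠ c := fun h => hq (h ▸ q.start_mem_support)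
    have step : Rw G (S.erase u) v c := ⟨hadj.1,
      Finset.mem_erase.2 ⟨Ne.symm hneva, hadj.2.1⟩,
      Finset.mem_erase.2 ⟨Ne.symm hnec, hadj.2.2⟩⟩
    exact Relation.ReflTransGen.head step (ih hq)

/-- a connected support has a non-cut vertex -/
lemma exists_noncut {S : Finset V} (hconn : ConnOn G S) (hne : S.Nonempty) :
    ∃ u ∈ S, ((S.erase u).Nonempty → ConnOn G (S.erase u)) := by
  classical
  obtain ⟨r, hr⟩ := hne
  obtain ⟨u, huS, hmax⟩ := Finset.exists_max_image S (fun w => (restrictG G S).dist r w) ⟨r, hr⟩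
  refine ⟨u, huS, fun hne' => ?_⟩
  have hru : r ≠ u := by
    rintro rfl
    obtain ⟨w, hw⟩ := hne'
    have hwS : w ∈ S := Finset.mem_of_mem_erase hw
    have hreach : (restrictG G S).Reachable r w := reachIn_iff_reachable.1 (hconn r hr w hwS)
    have hd := hmax w hwS
    have : (restrictG G S).dist r r = 0 := by
      simp [SimpleGraph.dist_self]
    rw [this, Nat.le_zero] at hd
    have : r = w := (hreach.dist_eq_zero_iff).1 hd
    exact (Finset.mem_erase.1 hw).1 this.symm
  have hrS' : r ∈ S.erase u := Finset.mem_erase.2 ⟨hru, hr⟩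
  -- every vertex of S.erase u is reachable from r inside S.erase u
  have key : ∀ a ∈ S.erase u, ReachIn G (S.erase u) r a := by
    intro a ha
    have haS : a ∈ S := Finset.mem_of_mem_erase ha
    have hau : a ≠ u := (Finset.mem_erase.1 ha).1
    have hreach : (restrictG G S).Reachable r a := reachIn_iff_reachable.1 (hconn r hr a haS)
    obtain ⟨p, hp⟩ := hreach.exists_walk_length_eq_dist
    have hup : u ∉ p.support := by
      intro hu
      have h1 : (restrictG G S).dist r u ≤ (p.takeUntil u hu).length :=
        SimpleGraph.dist_le _
      have h2 : (p.takeUntil u hu).length + (p.dropUntil u hu).length = p.length := by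
        rw [← SimpleGraph.Walk.length_append, SimpleGraph.Walk.take_spec]
      have h3 : 1 ≤ (p.dropUntil u hu).length := by
        by_contra h
        push_neg at h
        interval_cases h' : (p.dropUntil u hu).length
        · exact hau ((SimpleGraph.Walk.eq_of_length_eq_zero h').symm)
      have h4 := hmax a haS
      omega
    exact walk_to_reachIn p hup
  intro a ha b hb
  exact reachIn_trans (reachIn_symm (key a ha)) (key b hb)


/-! ### The strict lemma: for connected `W`, `t(W-u) < t(W)` -/

lemma strict_main : ∀ n : ℕ, ∀ W : Finset V, W.card = n → ConnOn G W → 2 ≤ W.card →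
    ∀ u ∈ W, 0 < pE G (W.erase u) (tt G W) := by
  intro n
  induction n using Nat.strong_induction_on with
  | _ n ih =>
    intro W hWn hconn hW2 u hu
    set θ := tt G W with hθdef
    have hWne : W.Nonempty := ⟨u, hu⟩
    have hWroot : pE G W θ = 0 := pE_tt (roots_nonempty hWne)
    have hnn : 0 ≤ pE G (W.erase u) θ := pE_nonneg_of_le (tt_erase_le hu)
    rcases lt_or_eq_of_le hnn with hpos | hbad
    · exact hpos
    have hbad : pE G (W.erase u) θ = 0 := hbad.symm
    exfalso
    -- step 1 : zeros propagate to neighbours of a bad vertex after double deletion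
    have step1 : ∀ v ∈ W, pE G (W.erase v) θ = 0 →
        ∀ w ∈ (W.erase v).filter (fun w => G.Adj v w),
          pE G ((W.erase v).erase w) θ = 0 := by
      intro v hv hbadv
      have hrec := pE_rec (G := G) (W := W) v hv θ
      rw [hWroot, hbadv, mul_zero, zero_sub] at hrec
      have hnn2 : ∀ w ∈ (W.erase v).filter (fun w => G.Adj v w),
          0 ≤ pE G ((W.erase v).erase w) θ := by
        intro w hw
        have hwv : w ∈ W.erase v := (Finset.mem_filter.1 hw).1
        exact pE_nonneg_of_le (le_trans (tt_erase_le hwv) (tt_erase_le hv))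
      have hsum : ∑ w ∈ (W.erase v).filter (fun w => G.Adj v w),
          pE G ((W.erase v).erase w) θ = 0 := by linarith
      exact fun w hw => (Finset.sum_eq_zero_iff_of_nonneg hnn2).1 hsum w hw
    -- step 2 : badness propagates along edges
    have step2 : ∀ v ∈ W, pE G (W.erase v) θ = 0 → ∀ w ∈ W, G.Adj v w →
        pE G (W.erase w) θ = 0 := by
      intro v hv hbadv w hw hadj
      have hvw : v ≠ w := hadj.ne
      have hwv : w ∈ W.erase v := Finset.mem_erase.2 ⟨hvw.symm, hw⟩
      have h0 : pE G ((W.erase v).erase w) θ = 0 :=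
        step1 v hv hbadv w (Finset.mem_filter.2 ⟨hwv, hadj⟩)
      set S' := W.erase w with hS'def
      have hvS' : v ∈ S' := Finset.mem_erase.2 ⟨hvw, hv⟩
      set D := comp G S' v with hDdef
      have hvD : v ∈ D := mem_comp_self hvS'
      have hDS' : D ⊆ S' := comp_subset
      have hcomm : (W.erase v).erase w = S'.erase v := by
        rw [hS'def]; exact Finset.erase_right_comm
      rw [hcomm] at h0
      -- split S'.erase v into (D.erase v) and (S' \ D)
      have hset : D.erase v ∪ (S' \ D) = S'.erase v := by
        ext z
        simp only [Finset.mem_union, Finset.mem_erase, Finset.mem_sdiff]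
        constructor
        · rintro (⟨hzv, hzD⟩ | ⟨hzS, hzD⟩)
          · exact ⟨hzv, hDS' hzD⟩
          · exact ⟨fun h => hzD (h ▸ hvD), hzS⟩
        · rintro ⟨hzv, hzS⟩
          by_cases hzD : z ∈ D
          · exact Or.inl ⟨hzv, hzD⟩
          · exact Or.inr ⟨hzS, hzD⟩
      have hdisj : Disjoint (D.erase v) (S' \ D) := by
        rw [Finset.disjoint_left]
        intro z hz1 hz2
        exact (Finset.mem_sdiff.1 hz2).2 (Finset.mem_of_mem_erase hz1)
      have hprod : pE G (S'.erase v) θ = pE G (D.erase v) θ * pE G (S' \ D) θ := by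
        have h := pE_mul (G := G) (D.erase v) (S' \ D) hdisj
          (fun a ha b hb => comp_no_edge (Finset.mem_of_mem_erase ha) hb) θ
        rw [hset] at h
        exact h
      rw [hprod] at h0
      rcases mul_eq_zero.1 h0 with hD0 | hR0
      · -- the component side vanishes : contradiction via IH
        rcases Finset.eq_empty_or_nonempty (D.erase v) with hDe | hDne
        · rw [hDe, pE_empty] at hD0
          exact absurd hD0 one_ne_zero
        · have hθD' : θ ≤ tt G (D.erase v) := le_tt hD0
          have hc1 : tt G (D.erase v) ≤ tt G D := tt_erase_le hvD
          have hc2 : tt G D ≤ tt G S' := tt_mono hDS'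
          have hc3 : tt G S' ≤ θ := tt_erase_le hw
          have httD : tt G D = θ := le_antisymm (le_trans hc2 hc3)
            (le_trans hθD' hc1)
          have hD2 : 2 ≤ D.card := by
            obtain ⟨z, hz⟩ := hDne
            have hzD : z ∈ D := Finset.mem_of_mem_erase hz
            have hzv : z ≠ v := (Finset.mem_erase.1 hz).1
            exact Finset.one_lt_card.2 ⟨z, hzD, v, hvD, hzv⟩
          have hDlt : D.card < n := by
            have h1 : D.card ≤ S'.card := Finset.card_le_card hDS'
            have h2 : S'.card = n - 1 := by
              rw [hS'def, Finset.card_erase_of_mem hw, hWn]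
            omega
          have := ih D.card hDlt D rfl (connOn_comp hvS') hD2 v hvD
          rw [httD] at this
          exact absurd hD0 (ne_of_gt this)
      · -- the rest side vanishes : w is bad
        have hsplit := pE_comp_split (G := G) hvS' θ
        rw [← hDdef] at hsplit
        rw [hsplit, hR0, mul_zero]
    -- step 3 : badness propagates along reachability
    have step3 : ∀ z, ReachIn G W u z → pE G (W.erase z) θ = 0 := by
      intro z hz
      induction hz with
      | refl => exact hbad
      | tail hub step ihz =>
        rename_i b c
        exact step2 b step.2.1 ihz c step.2.2 step.1
    -- step 4 : contradiction at a non-cut vertex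
    obtain ⟨z0, hz0W, hz0nc⟩ := exists_noncut hconn hWne
    have hz0bad : pE G (W.erase z0) θ = 0 := step3 z0 (hconn u hu z0 hz0W)
    have herase_ne : (W.erase z0).Nonempty := by
      rw [← Finset.card_pos, Finset.card_erase_of_mem hz0W]
      omega
    have hconn' : ConnOn G (W.erase z0) := hz0nc herase_ne
    obtain ⟨w', hw'⟩ := herase_ne
    have hw'W : w' ∈ W := Finset.mem_of_mem_erase hw'
    have hne' : z0 ≠ w' := fun h => (Finset.mem_erase.1 hw').1 h.symm
    rcases Relation.ReflTransGen.cases_head (hconn z0 hz0W w' hw'W) with heq | ⟨c, hstep, -⟩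
    · exact hne' heq
    have hcW : c ∈ W := hstep.2.2
    have hadj : G.Adj z0 c := hstep.1
    have hcz0 : c ∈ W.erase z0 := Finset.mem_erase.2 ⟨hadj.ne', hcW⟩
    have h0 : pE G ((W.erase z0).erase c) θ = 0 :=
      step1 z0 hz0W hz0bad c (Finset.mem_filter.2 ⟨hcz0, hadj⟩)
    have httz0 : tt G (W.erase z0) = θ := le_antisymm (tt_erase_le hz0W) (le_tt hz0bad)
    rcases Finset.eq_empty_or_nonempty ((W.erase z0).erase c) with hce | hcne
    · rw [hce, pE_empty] at h0
      exact absurd h0 one_ne_zero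
    · have hc2 : 2 ≤ (W.erase z0).card := by
        obtain ⟨z, hz⟩ := hcne
        exact Finset.one_lt_card.2 ⟨z, Finset.mem_of_mem_erase hz, c, hcz0,
          (Finset.mem_erase.1 hz).1⟩
      have hlt : (W.erase z0).card < n := by
        rw [Finset.card_erase_of_mem hz0W, hWn]; omega
      have := ih (W.erase z0).card hlt (W.erase z0) rfl hconn' hc2 c hcz0
      rw [httz0] at this
      exact absurd h0 (ne_of_gt this)

end MatchDev

namespace MatchDev
variable {V : Type*} [Fintype V] {G : SimpleGraph V}

lemma matchingCount_eq (k : ℕ) :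
    matchingCount G k = ((mSet G (Finset.univ : Finset V)).filter
      (fun M => M.card = k)).card := by
  classical
  rw [matchingCount, Nat.card_eq_fintype_card, Fintype.card_subtype]
  congr 1
  ext M
  simp only [Finset.mem_filter, mem_mSet, isM, Finset.mem_univ, true_and]
  constructor
  · rintro ⟨h1, h2, h3⟩
    exact ⟨⟨h2, fun e he v hv => trivial, h3⟩, h1⟩
  · rintro ⟨⟨h2, -, h3⟩, h1⟩
    exact ⟨h1, h2, h3⟩

lemma matchPoly_eval_eq (x : ℝ) : (matchPoly G).eval x = pE G (Finset.univ : Finset V) x := by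
  classical
  rw [matchPoly]
  rw [Polynomial.eval_finset_sum]
  simp only [Polynomial.eval_mul, Polynomial.eval_C, Polynomial.eval_pow, Polynomial.eval_X]
  rw [pE]
  rw [← Finset.sum_fiberwise_of_maps_to (g := fun M : Finset (Sym2 V) => M.card)
    (t := Finset.range (Fintype.card V + 1)) ?_ (fun M => (-1 : ℝ) ^ M.card * x ^ (unc Finset.univ M).card)]
  · refine Finset.sum_congr rfl fun k hk => ?_
    have hinner : ∀ M ∈ (mSet G (Finset.univ : Finset V)).filter (fun M => M.card = k),
        (-1 : ℝ) ^ M.card * x ^ (unc Finset.univ M).card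
          = (-1 : ℝ) ^ k * x ^ (Fintype.card V - 2 * k) := by
      intro M hM
      obtain ⟨hMm, hMk⟩ := Finset.mem_filter.1 hM
      have hMm' := mem_mSet.1 hMm
      rw [card_unc hMm', Finset.card_univ, hMk]
    rw [Finset.sum_congr rfl hinner, Finset.sum_const, nsmul_eq_mul, ← matchingCount_eq]
    ring
  · intro M hM
    have hMm := mem_mSet.1 hM
    have := two_mul_card_le hMm
    rw [Finset.card_univ] at this
    have h2 : M.card < Fintype.card V + 1 := by omega
    exact Finset.mem_range.2 h2

lemma tt_eq_zero_of_rootSet_empty {W : Finset V} (h : rootSet G W = ∅) : tt G W = 0 := by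
  unfold tt; rw [h]; exact Real.sSup_empty

lemma tt_lt_of_pos {W : Finset V} {θ : ℝ} (hne : W.Nonempty) (hle : tt G W ≤ θ)
    (hpos : 0 < pE G W θ) : tt G W < θ := by
  rcases lt_or_eq_of_le hle with h | h
  · exact h
  · exfalso
    have h0 : pE G W (tt G W) = 0 := pE_tt (roots_nonempty hne)
    rw [h] at h0
    rw [h0] at hpos
    exact lt_irrefl 0 hpos

/-- one edge deletion : `t` decreases and `pE` increases above `t` -/
lemma one_edge {a b : V} (hadj : G.Adj a b) :
    tt (G.deleteEdges {s(a, b)}) (Finset.univ : Finset V) ≤ tt G (Finset.univ : Finset V) ∧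
    ∀ x : ℝ, tt G (Finset.univ : Finset V) ≤ x →
      pE G (Finset.univ : Finset V) x ≤ pE (G.deleteEdges {s(a, b)}) (Finset.univ : Finset V) x := by
  classical
  have hsub : tt G ((Finset.univ.erase a).erase b) ≤ tt G (Finset.univ : Finset V) :=
    tt_mono (Finset.subset_univ _)
  have hkey : ∀ x : ℝ, tt G (Finset.univ : Finset V) ≤ x →
      pE (G.deleteEdges {s(a, b)}) Finset.univ x
        = pE G Finset.univ x + pE G ((Finset.univ.erase a).erase b) x := by
    intro x hx
    have := pE_edge (G := G) a b hadj (Finset.mem_univ a) (Finset.mem_univ b) x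
    linarith [this]
  constructor
  · rcases Set.eq_empty_or_nonempty (rootSet (G.deleteEdges {s(a, b)}) (Finset.univ : Finset V))
      with hre | hrn
    · rw [tt_eq_zero_of_rootSet_empty hre]
      exact tt_nonneg
    · refine csSup_le hrn fun y hy => ?_
      by_contra hgt
      push_neg at hgt
      have h1 : 0 < pE G Finset.univ y := pE_pos_of_lt hgt
      have h2 : 0 ≤ pE G ((Finset.univ.erase a).erase b) y :=
        pE_nonneg_of_le (le_trans hsub (le_of_lt hgt))
      have := hkey y (le_of_lt hgt)
      have : pE (G.deleteEdges {s(a, b)}) Finset.univ y > 0 := by linarith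
      exact absurd hy (ne_of_gt this)
  · intro x hx
    have h2 : 0 ≤ pE G ((Finset.univ.erase a).erase b) x :=
      pE_nonneg_of_le (le_trans hsub hx)
    linarith [hkey x hx]

/-- chain of edge deletions -/
lemma chain_edges : ∀ S : Finset (Sym2 V), ↑S ⊆ G.edgeSet →
    tt (G.deleteEdges ↑S) (Finset.univ : Finset V) ≤ tt G (Finset.univ : Finset V) ∧
    ∀ x : ℝ, tt G (Finset.univ : Finset V) ≤ x →
      pE G (Finset.univ : Finset V) x ≤ pE (G.deleteEdges ↑S) (Finset.univ : Finset V) x := by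
  classical
  intro S
  induction S using Finset.induction with
  | empty =>
    intro _
    rw [Finset.coe_empty, SimpleGraph.deleteEdges_empty]
    exact ⟨le_refl _, fun x _ => le_refl _⟩
  | @insert e S heS ihS =>
    intro hsub
    have hS : ↑S ⊆ G.edgeSet := fun f hf => hsub (by
      simp only [Finset.coe_insert, Set.mem_insert_iff]
      exact Or.inr hf)
    obtain ⟨ih1, ih2⟩ := ihS hS
    have heG : e ∈ G.edgeSet := hsub (by simp)
    have heK : e ∈ (G.deleteEdges ↑S).edgeSet := by
      rw [SimpleGraph.edgeSet_deleteEdges]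
      exact ⟨heG, fun h => heS (Finset.mem_coe.1 h)⟩
    induction e using Sym2.ind with
    | _ a b =>
      have hadjK : (G.deleteEdges (↑S : Set (Sym2 V))).Adj a b :=
        (SimpleGraph.mem_edgeSet _).1 heK
      have hstep := one_edge (G := G.deleteEdges ↑S) hadjK
      have heq : (G.deleteEdges ↑S).deleteEdges {s(a, b)}
          = G.deleteEdges ↑(insert s(a, b) S) := by
        rw [SimpleGraph.deleteEdges_deleteEdges, Finset.coe_insert, Set.insert_eq,
          Set.union_comm]
      rw [heq] at hstep
      refine ⟨le_trans hstep.1 ih1, fun x hx => ?_⟩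
      exact le_trans (ih2 x hx) (hstep.2 x (le_trans ih1 hx))

lemma maxRoot_eq : maxRoot G = tt G (Finset.univ : Finset V) := by
  unfold maxRoot tt rootSet
  congr 1
  ext x
  simp [matchPoly_eval_eq]

end MatchDev

open MatchDev in
/-- If `G` is connected and `H` is a proper spanning subgraph of `G`, then `G ≻ H`:
`m(H,x) > m(G,x)` for all `x ≥ t(G)`; in particular `t(H) < t(G)`. -/
theorem gsucc_of_proper_spanning_subgraph_connected {V : Type*} [Fintype V]
    (G H : SimpleGraph V) (hG : G.Connected) (hHG : H ≤ G) (hne : H ≠ G) :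
    (∀ x : ℝ, maxRoot G ≤ x → (matchPoly G).eval x < (matchPoly H).eval x) ∧
      maxRoot H < maxRoot G := by
  classical
  have hNE : Nonempty V := hG.nonempty
  have huniv_ne : (Finset.univ : Finset V).Nonempty := Finset.univ_nonempty
  have hEsub : H.edgeSet ⊆ G.edgeSet := SimpleGraph.edgeSet_mono hHG
  have hEne : H.edgeSet ≠ G.edgeSet := fun h => hne (SimpleGraph.edgeSet_inj.1 h)
  obtain ⟨e, heG, heH⟩ := Set.exists_of_ssubset (ssubset_of_subset_of_ne hEsub hEne)
  revert heG heH
  induction e using Sym2.ind with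
  | _ a b =>
    intro heG heH
    have hadj : G.Adj a b := (SimpleGraph.mem_edgeSet G).1 heG
    have hab : a ≠ b := hadj.ne
    have hconn : ConnOn G (Finset.univ : Finset V) := by
      intro p _ q _
      have hreach := (SimpleGraph.reachable_iff_reflTransGen p q).1 (hG.preconnected p q)
      exact Relation.ReflTransGen.mono
        (by intro x y hxy; exact ⟨hxy, Finset.mem_univ x, Finset.mem_univ y⟩) _ _ hreach
    have hcard2 : 2 ≤ (Finset.univ : Finset V).card :=
      Finset.one_lt_card.2 ⟨a, Finset.mem_univ a, b, Finset.mem_univ b, hab⟩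
    set θ := tt G (Finset.univ : Finset V) with hθdef
    have hbmem : b ∈ Finset.univ.erase a := Finset.mem_erase.2 ⟨hab.symm, Finset.mem_univ b⟩
    have hstrict : 0 < pE G (Finset.univ.erase a) θ :=
      strict_main (Finset.univ : Finset V).card Finset.univ rfl hconn hcard2 a (Finset.mem_univ a)
    have h1 : tt G (Finset.univ.erase a) < θ :=
      tt_lt_of_pos ⟨b, hbmem⟩ (tt_erase_le (Finset.mem_univ a)) hstrict
    have h2 : tt G ((Finset.univ.erase a).erase b) ≤ tt G (Finset.univ.erase a) :=
      tt_erase_le hbmem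
    have hposab : ∀ x : ℝ, θ ≤ x → 0 < pE G ((Finset.univ.erase a).erase b) x := by
      intro x hx
      exact pE_pos_of_lt (lt_of_le_of_lt h2 (lt_of_lt_of_le h1 hx))
    have hG1 : ∀ x : ℝ, θ ≤ x →
        pE G Finset.univ x < pE (G.deleteEdges {s(a, b)}) Finset.univ x := by
      intro x hx
      have he := pE_edge (G := G) a b hadj (Finset.mem_univ a) (Finset.mem_univ b) x
      have hp := hposab x hx
      linarith
    -- delete the remaining edges
    have hDfin : (G.edgeSet \ H.edgeSet).Finite := Set.toFinite _
    set S : Finset (Sym2 V) := hDfin.toFinset.erase s(a, b) with hSdef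
    have heD : s(a, b) ∈ G.edgeSet \ H.edgeSet := ⟨heG, heH⟩
    have hcoe : ({s(a, b)} : Set (Sym2 V)) ∪ ↑S = G.edgeSet \ H.edgeSet := by
      rw [hSdef, Finset.coe_erase, Set.Finite.coe_toFinset]
      rw [Set.union_comm]
      exact Set.diff_union_of_subset (Set.singleton_subset_iff.2 heD)
    have hHdel : H = G.deleteEdges (G.edgeSet \ H.edgeSet) := by
      apply SimpleGraph.edgeSet_inj.1
      rw [SimpleGraph.edgeSet_deleteEdges]
      exact (Set.diff_diff_cancel_left hEsub).symm
    have hG1H : (G.deleteEdges {s(a, b)}).deleteEdges ↑S = H := by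
      rw [SimpleGraph.deleteEdges_deleteEdges, hcoe, ← hHdel]
    have hSsub : ↑S ⊆ (G.deleteEdges {s(a, b)}).edgeSet := by
      intro f hf
      rw [hSdef] at hf
      have hfe : f ≠ s(a, b) := Finset.ne_of_mem_erase hf
      have hfD : f ∈ G.edgeSet \ H.edgeSet := by
        have := Finset.mem_of_mem_erase hf
        rwa [Set.Finite.mem_toFinset] at this
      rw [SimpleGraph.edgeSet_deleteEdges]
      exact ⟨hfD.1, fun h => hfe h⟩
    obtain ⟨hc1, hc2⟩ := chain_edges (G := G.deleteEdges {s(a, b)}) S hSsub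
    rw [hG1H] at hc1 hc2
    have httG1 : tt (G.deleteEdges {s(a, b)}) (Finset.univ : Finset V) ≤ θ := (one_edge hadj).1
    have main : ∀ x : ℝ, θ ≤ x → pE G Finset.univ x < pE H Finset.univ x := by
      intro x hx
      have hA := hG1 x hx
      have hB := hc2 x (le_trans httG1 hx)
      linarith
    constructor
    · intro x hx
      rw [maxRoot_eq] at hx
      rw [matchPoly_eval_eq, matchPoly_eval_eq]
      exact main x hx
    · rw [maxRoot_eq, maxRoot_eq]
      by_contra hge
      push_neg at hge
      have hHroot : pE H Finset.univ (tt H Finset.univ) = 0 := pE_tt (roots_nonempty huniv_ne)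
      have hlt := main _ hge
      have hnn : 0 ≤ pE G Finset.univ (tt H Finset.univ) := pE_nonneg_of_le hge
      rw [hHroot] at hlt
      linarith
end

section
/- If H is a proper spanning subgraph of a finite simple graph G (not necessarily connected), then m(H, x) > m(G, x) for all real x > t(G). -/
open Polynomial

section Aux
open Finset
variable {V : Type*} [Fintype V]

/-- Matching predicate: `s` is a matching of `G` with all endpoints in `A`. -/
def IsMG (G : SimpleGraph V) (A : Finset V) (s : Finset (Sym2 V)) : Prop :=
  (∀ e ∈ s, e ∈ G.edgeSet) ∧ (∀ e ∈ s, ∀ f ∈ s, e ≠ f → ∀ x : V, x ∈ e → x ∉ f) ∧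
    (∀ e ∈ s, ∀ x : V, x ∈ e → x ∈ A)

/-- Number of `k`-edge matchings of `G` inside `A`. -/
noncomputable def mc (G : SimpleGraph V) (A : Finset V) (k : ℕ) : ℕ :=
  Nat.card {s : Finset (Sym2 V) // IsMG G A s ∧ s.card = k}

open Classical in
/-- The finset of `k`-edge matchings of `G` inside `A`. -/
noncomputable def mset (G : SimpleGraph V) (A : Finset V) (k : ℕ) : Finset (Finset (Sym2 V)) :=
  Finset.univ.filter fun s => IsMG G A s ∧ s.card = k

open Classical in
lemma mem_mset {G : SimpleGraph V} {A : Finset V} {k : ℕ} {s : Finset (Sym2 V)} :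
    s ∈ mset G A k ↔ IsMG G A s ∧ s.card = k := by
  simp [mset]

open Classical in
lemma mc_eq_card (G : SimpleGraph V) (A : Finset V) (k : ℕ) :
    mc G A k = (mset G A k).card := by
  rw [mc, Nat.card_eq_fintype_card, mset, Fintype.card_subtype]

lemma mc_zero (G : SimpleGraph V) (A : Finset V) : mc G A 0 = 1 := by
  classical
  rw [mc_eq_card]
  have : mset G A 0 = {∅} := by
    ext s
    simp only [mem_mset, Finset.card_eq_zero, Finset.mem_singleton]
    constructor
    · rintro ⟨-, h⟩; exact h
    · rintro rfl
      refine ⟨⟨by simp, by simp, by simp⟩, rfl⟩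
  rw [this, Finset.card_singleton]

open Classical in
/-- vertex set of an edge as a finset -/
noncomputable def vset (e : Sym2 V) : Finset V := Finset.univ.filter (· ∈ e)

open Classical in
lemma mem_vset {e : Sym2 V} {x : V} : x ∈ vset e ↔ x ∈ e := by simp [vset]

lemma vset_mk {a b : V} (hab : a ≠ b) : (vset s(a,b)).card = 2 := by
  classical
  have : vset s(a,b) = {a, b} := by
    ext x; simp [mem_vset, Sym2.mem_iff, Finset.mem_insert]
  rw [this, Finset.card_insert_of_notMem (by simpa using hab), Finset.card_singleton]

/-- A matching with `k` edges inside `A` uses `2k` distinct vertices, so `2k ≤ |A|`. -/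
lemma mc_eq_zero_of_lt {G : SimpleGraph V} {A : Finset V} {k : ℕ} (h : A.card < 2 * k) :
    mc G A k = 0 := by
  classical
  rw [mc_eq_card, Finset.card_eq_zero]
  rw [Finset.eq_empty_iff_forall_notMem]
  intro s hs
  rw [mem_mset] at hs
  obtain ⟨⟨hedge, hdisj, hsub⟩, hcard⟩ := hs
  have hdisj' : ∀ e ∈ s, ∀ f ∈ s, e ≠ f → Disjoint (vset e) (vset f) := by
    intro e he f hf hef
    rw [Finset.disjoint_left]
    intro x hx hx'
    exact hdisj e he f hf hef x (mem_vset.mp hx) (mem_vset.mp hx')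
  have hbu : (s.biUnion vset).card = ∑ e ∈ s, (vset e).card := Finset.card_biUnion hdisj'
  have hcard2 : ∀ e ∈ s, (vset e).card = 2 := by
    intro e he
    obtain ⟨⟨a, b⟩, rfl⟩ := e.exists_rep
    exact vset_mk fun hab => (G.not_isDiag_of_mem_edgeSet (hedge _ he)) (by simp [hab])
  have hsum : ∑ e ∈ s, (vset e).card = 2 * k := by
    rw [Finset.sum_congr rfl hcard2]; simp [hcard, mul_comm]
  have hsubA : s.biUnion vset ⊆ A := by
    intro x hx
    obtain ⟨e, he, hxe⟩ := Finset.mem_biUnion.mp hx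
    exact hsub e he x (mem_vset.mp hxe)
  have := Finset.card_le_card hsubA
  omega

open Classical in
/-- Matchings of size `k+1` containing the edge `s(u,v)` are counted by `mc G (A∖{u,v}) k`. -/
lemma card_with_edge [DecidableEq V] {G : SimpleGraph V} {A : Finset V} {u v : V}
    (h : G.Adj u v) (hu : u ∈ A) (hv : v ∈ A) (k : ℕ) :
    ((mset G A (k+1)).filter (fun s => s(u,v) ∈ s)).card = mc G ((A.erase u).erase v) k := by
  rw [mc_eq_card]
  refine Finset.card_bij' (fun s _ => s.erase s(u,v)) (fun t _ => insert s(u,v) t) ?_ ?_ ?_ ?_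
  · -- forward membership
    intro s hs
    rw [Finset.mem_filter, mem_mset] at hs
    obtain ⟨⟨⟨hedge, hdisj, hsub⟩, hcard⟩, hmem⟩ := hs
    rw [mem_mset]
    refine ⟨⟨?_, ?_, ?_⟩, ?_⟩
    · exact fun e he => hedge e (Finset.mem_of_mem_erase he)
    · intro e he f hf hef x hx
      exact hdisj e (Finset.mem_of_mem_erase he) f (Finset.mem_of_mem_erase hf) hef x hx
    · intro e he x hx
      have he' := Finset.mem_of_mem_erase he
      have hne : e ≠ s(u,v) := Finset.ne_of_mem_erase he
      have hxA : x ∈ A := hsub e he' x hx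
      have hxu : x ∉ s(u,v) := hdisj e he' s(u,v) hmem hne x hx
      rw [Sym2.mem_iff] at hxu
      push_neg at hxu
      exact Finset.mem_erase.mpr ⟨hxu.2, Finset.mem_erase.mpr ⟨hxu.1, hxA⟩⟩
    · rw [Finset.card_erase_of_mem hmem, hcard]; rfl
  · -- backward membership
    intro t ht
    rw [mem_mset] at ht
    obtain ⟨⟨hedge, hdisj, hsub⟩, hcard⟩ := ht
    have huv : ∀ e ∈ t, ∀ x : V, x ∈ s(u,v) → x ∉ e := by
      intro e he x hx hxe
      have := hsub e he x hxe
      rw [Sym2.mem_iff] at hx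
      rcases hx with rfl | rfl
      · exact (Finset.mem_erase.mp (Finset.mem_of_mem_erase this)).1 rfl
      · exact (Finset.mem_erase.mp this).1 rfl
    have hnotmem : s(u,v) ∉ t := by
      intro hmem
      exact huv _ hmem u (by simp) (by simp)
    rw [Finset.mem_filter, mem_mset]
    refine ⟨⟨⟨?_, ?_, ?_⟩, ?_⟩, Finset.mem_insert_self _ _⟩
    · intro e he
      rcases Finset.mem_insert.mp he with rfl | he'
      · exact G.mem_edgeSet.mpr h
      · exact hedge e he'
    · intro e he f hf hef x hx
      rcases Finset.mem_insert.mp he with rfl | he' <;>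
        rcases Finset.mem_insert.mp hf with rfl | hf'
      · exact absurd rfl hef
      · exact huv f hf' x hx
      · intro hxf; exact huv e he' x hxf hx
      · exact hdisj e he' f hf' hef x hx
    · intro e he x hx
      rcases Finset.mem_insert.mp he with rfl | he'
      · rw [Sym2.mem_iff] at hx
        rcases hx with rfl | rfl
        exacts [hu, hv]
      · exact Finset.mem_of_mem_erase (Finset.mem_of_mem_erase (hsub e he' x hx))
    · rw [Finset.card_insert_of_notMem hnotmem, hcard]
  · intro s hs
    rw [Finset.mem_filter] at hs
    exact Finset.insert_erase hs.2
  · intro t ht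
    rw [mem_mset] at ht
    obtain ⟨⟨hedge, hdisj, hsub⟩, hcard⟩ := ht
    apply Finset.erase_insert
    intro hmem
    have := hsub _ hmem u (by simp)
    exact (Finset.mem_erase.mp (Finset.mem_of_mem_erase this)).1 rfl
open Classical in
/-- Edge deletion recurrence for matching counts. -/
lemma mc_edge_rec [DecidableEq V] {G : SimpleGraph V} {A : Finset V} {u v : V}
    (h : G.Adj u v) (hu : u ∈ A) (hv : v ∈ A) (k : ℕ) :
    mc G A (k+1) = mc (G.deleteEdges {s(u,v)}) A (k+1) + mc G ((A.erase u).erase v) k := by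
  have hset : (mset G A (k+1)).filter (fun s => ¬ s(u,v) ∈ s)
      = mset (G.deleteEdges {s(u,v)}) A (k+1) := by
    ext s
    simp only [mem_mset, Finset.mem_filter]
    constructor
    · rintro ⟨⟨⟨hedge, hdisj, hsub⟩, hcard⟩, hne⟩
      refine ⟨⟨fun e he => ?_, hdisj, hsub⟩, hcard⟩
      rw [SimpleGraph.edgeSet_deleteEdges, Set.mem_diff]
      exact ⟨hedge e he, by rintro rfl; exact hne he⟩
    · rintro ⟨⟨hedge, hdisj, hsub⟩, hcard⟩
      have hne : ¬ s(u,v) ∈ s := by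
        intro hmem
        have := hedge _ hmem
        rw [SimpleGraph.edgeSet_deleteEdges] at this
        exact this.2 rfl
      refine ⟨⟨⟨fun e he => ?_, hdisj, hsub⟩, hcard⟩, hne⟩
      have := hedge e he
      rw [SimpleGraph.edgeSet_deleteEdges] at this
      exact this.1
  rw [mc_eq_card G A, ← Finset.card_filter_add_card_filter_not
      (p := fun s : Finset (Sym2 V) => s(u,v) ∈ s), card_with_edge h hu hv k, hset,
      ← mc_eq_card, add_comm]

open Classical in
/-- Vertex deletion recurrence for matching counts. -/
lemma mc_vertex_rec [DecidableEq V] {G : SimpleGraph V} {A : Finset V} {u : V}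
    (hu : u ∈ A) (k : ℕ) :
    mc G A (k+1) = mc G (A.erase u) (k+1) +
      ∑ v ∈ (A.erase u).filter (G.Adj u), mc G ((A.erase u).erase v) k := by
  rw [mc_eq_card G A, ← Finset.card_filter_add_card_filter_not
      (p := fun s : Finset (Sym2 V) => ∀ e ∈ s, u ∉ e)]
  congr 1
  · -- matchings avoiding u
    rw [mc_eq_card]
    congr 1
    ext s
    simp only [mem_mset, Finset.mem_filter]
    constructor
    · rintro ⟨⟨⟨hedge, hdisj, hsub⟩, hcard⟩, havoid⟩
      refine ⟨⟨hedge, hdisj, fun e he x hx => Finset.mem_erase.mpr ⟨?_, hsub e he x hx⟩⟩, hcard⟩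
      rintro rfl; exact havoid e he hx
    · rintro ⟨⟨hedge, hdisj, hsub⟩, hcard⟩
      refine ⟨⟨⟨hedge, hdisj, fun e he x hx => Finset.mem_of_mem_erase (hsub e he x hx)⟩, hcard⟩,
        fun e he hue => ?_⟩
      exact (Finset.mem_erase.mp (hsub e he u hue)).1 rfl
  · -- matchings covering u
    have hsplit : (mset G A (k+1)).filter (fun s => ¬ ∀ e ∈ s, u ∉ e) =
        ((A.erase u).filter (G.Adj u)).biUnion
          (fun v => (mset G A (k+1)).filter (fun s => s(u,v) ∈ s)) := by
      ext s
      simp only [Finset.mem_filter, Finset.mem_biUnion, Finset.mem_erase]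
      constructor
      · rintro ⟨hs, hcov⟩
        push_neg at hcov
        obtain ⟨e, he, hue⟩ := hcov
        obtain ⟨w, rfl⟩ := Sym2.mem_iff_exists.mp hue
        have hadj : G.Adj u w := G.mem_edgeSet.mp ((mem_mset.mp hs).1.1 _ he)
        have hwA : w ∈ A := (mem_mset.mp hs).1.2.2 _ he w (Sym2.mem_mk_right _ _)
        exact ⟨w, ⟨⟨hadj.ne', hwA⟩, hadj⟩, hs, he⟩
      · rintro ⟨v, -, hs, hmem⟩
        refine ⟨hs, fun hall => hall _ hmem (Sym2.mem_mk_left _ _)⟩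
    rw [hsplit, Finset.card_biUnion, Finset.sum_congr rfl]
    · intro v hv
      rw [Finset.mem_filter, Finset.mem_erase] at hv
      exact card_with_edge hv.2 hu hv.1.2 k
    · intro v hv w hw hvw
      rw [Function.onFun, Finset.disjoint_left]
      intro s hsv hsw
      rw [Finset.mem_filter] at hsv hsw
      have hdisj := (mem_mset.mp hsv.1).1.2.1
      have hne : s(u,v) ≠ s(u,w) := by
        intro hh
        exact hvw ((Sym2.congr_right).mp hh)
      exact hdisj _ hsv.2 _ hsw.2 hne u (Sym2.mem_mk_left _ _) (Sym2.mem_mk_left _ _)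
/-- The matching polynomial of `G` restricted to vertex set `A`. -/
noncomputable def mp (G : SimpleGraph V) (A : Finset V) : Polynomial ℝ :=
  ∑ k ∈ Finset.range (A.card + 1),
    Polynomial.C ((-1 : ℝ) ^ k * (mc G A k : ℝ)) * Polynomial.X ^ (A.card - 2 * k)

lemma mp_monic (G : SimpleGraph V) (A : Finset V) : (mp G A).Monic := by
  rcases Nat.eq_zero_or_pos A.card with h0 | hpos
  · have : mp G A = 1 := by
      rw [mp, h0]
      simp [mc_zero]
    rw [this]; exact monic_one
  · have hrw : mp G A = X ^ A.card +
        ∑ k ∈ Finset.range A.card,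
          C ((-1 : ℝ) ^ (k+1) * (mc G A (k+1) : ℝ)) * X ^ (A.card - 2 * (k+1)) := by
      rw [mp, Finset.sum_range_succ' _ A.card]
      rw [add_comm]
      congr 1
      simp [mc_zero]
    rw [hrw]
    have hdeg : (∑ k ∈ Finset.range A.card,
        C ((-1 : ℝ) ^ (k+1) * (mc G A (k+1) : ℝ)) * X ^ (A.card - 2 * (k+1))).degree
        < (A.card : WithBot ℕ) := by
      apply lt_of_le_of_lt (Polynomial.degree_sum_le _ _)
      rw [Finset.sup_lt_iff (by exact WithBot.bot_lt_coe _)]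
      intro k hk
      apply lt_of_le_of_lt (Polynomial.degree_C_mul_X_pow_le _ _)
      exact_mod_cast Nat.lt_of_lt_of_le (by omega) (le_refl A.card)
    exact Polynomial.monic_X_pow_add hdeg

lemma mp_eval_neg (G : SimpleGraph V) (A : Finset V) (x : ℝ) :
    (mp G A).eval (-x) = (-1) ^ A.card * (mp G A).eval x := by
  rw [mp]
  simp only [eval_finset_sum, eval_mul, eval_pow, eval_C, eval_X, Finset.mul_sum]
  refine Finset.sum_congr rfl fun k hk => ?_
  rcases le_or_gt (2 * k) A.card with hle | hlt
  · have h1 : (-x) ^ (A.card - 2 * k) = (-1) ^ (A.card - 2*k) * x ^ (A.card - 2*k) := by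
      rw [neg_pow]
    have h2 : ((-1 : ℝ)) ^ (A.card - 2 * k) = (-1) ^ A.card := by
      have hh : A.card - 2 * k + 2 * k = A.card := by omega
      calc ((-1:ℝ)) ^ (A.card - 2*k) = (-1) ^ (A.card - 2*k) * ((-1) ^ (2*k)) := by
            rw [pow_mul]; norm_num
        _ = (-1) ^ (A.card - 2*k + 2*k) := (pow_add _ _ _).symm
        _ = (-1) ^ A.card := by rw [hh]
    rw [h1, h2]
    ring
  · rw [mc_eq_zero_of_lt hlt]
    simp

/-- largest real root (junk value `0` if none) -/
noncomputable def troot (p : Polynomial ℝ) : ℝ := sSup {x : ℝ | p.eval x = 0}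

lemma root_le_troot {p : Polynomial ℝ} (hp : p ≠ 0) {r : ℝ} (hr : p.eval r = 0) :
    r ≤ troot p :=
  le_csSup (Set.Finite.bddAbove (p.finite_setOf_isRoot hp)) hr

lemma troot_le_of_roots_le {p : Polynomial ℝ} {t : ℝ} (ht : 0 ≤ t)
    (h : ∀ r : ℝ, p.eval r = 0 → r ≤ t) : troot p ≤ t := by
  rcases Set.eq_empty_or_nonempty {x : ℝ | p.eval x = 0} with he | hne
  · rw [troot, he, Real.sSup_empty]; exact ht
  · exact csSup_le hne h

lemma eval_nonneg_of_roots_le {p : Polynomial ℝ} (hm : p.Monic) {x : ℝ}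
    (h : ∀ r : ℝ, p.eval r = 0 → r ≤ x) : 0 ≤ p.eval x := by
  by_contra hneg
  push_neg at hneg
  rcases Nat.eq_zero_or_pos p.natDegree with h0 | hpos
  · have : p = 1 := hm.natDegree_eq_zero.mp h0
    rw [this] at hneg; norm_num at hneg
  · have hdeg : 0 < p.degree := natDegree_pos_iff_degree_pos.mp hpos
    have htop : Filter.Tendsto (fun y => p.eval y) Filter.atTop Filter.atTop :=
      p.tendsto_atTop_of_leadingCoeff_nonneg hdeg (by rw [hm.leadingCoeff]; norm_num)
    obtain ⟨y, hy1, hy2⟩ := ((htop.eventually_gt_atTop 0).and (Filter.eventually_ge_atTop x)).exists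
    have hxy : x ≤ y := hy2
    have hcont : ContinuousOn (fun z => p.eval z) (Set.Icc x y) :=
      (Polynomial.continuous p).continuousOn
    have h0mem : (0:ℝ) ∈ Set.Icc (p.eval x) (p.eval y) := ⟨le_of_lt hneg, le_of_lt hy1⟩
    obtain ⟨r, hr_mem, hr⟩ := intermediate_value_Icc hxy hcont h0mem
    simp only at hr
    have hrx : r = x := le_antisymm (h r hr) hr_mem.1
    rw [hrx] at hr
    linarith

lemma eval_pos_of_roots_lt {p : Polynomial ℝ} (hm : p.Monic) {x : ℝ}
    (h : ∀ r : ℝ, p.eval r = 0 → r < x) : 0 < p.eval x := by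
  have h1 := eval_nonneg_of_roots_le hm (fun r hr => le_of_lt (h r hr))
  rcases lt_or_eq_of_le h1 with h2 | h2
  · exact h2
  · exact absurd (h x h2.symm) (lt_irrefl x)

lemma troot_mp_nonneg (G : SimpleGraph V) (A : Finset V) : 0 ≤ troot (mp G A) := by
  rcases Set.eq_empty_or_nonempty {x : ℝ | (mp G A).eval x = 0} with he | ⟨r, hr⟩
  · rw [troot, he, Real.sSup_empty]
  · have hp : mp G A ≠ 0 := (mp_monic G A).ne_zero
    have hr' : (mp G A).eval (-r) = 0 := by
      rw [mp_eval_neg, hr, mul_zero]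
    rcases le_or_gt 0 r with h | h
    · exact le_trans h (root_le_troot hp hr)
    · exact le_trans (by linarith) (root_le_troot hp hr')

lemma eval_mp_pos {G : SimpleGraph V} {A : Finset V} {x : ℝ} (hx : troot (mp G A) < x) :
    0 < (mp G A).eval x :=
  eval_pos_of_roots_lt (mp_monic G A) fun r hr =>
    lt_of_le_of_lt (root_le_troot (mp_monic G A).ne_zero hr) hx

lemma eval_mp_nonneg {G : SimpleGraph V} {A : Finset V} {x : ℝ} (hx : troot (mp G A) ≤ x) :
    0 ≤ (mp G A).eval x :=
  eval_nonneg_of_roots_le (mp_monic G A) fun r hr =>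
    le_trans (root_le_troot (mp_monic G A).ne_zero hr) hx


/-- Helper: shifted sum over a smaller vertex set gives `-mp G B`. -/
lemma sum_succ_mp (G : SimpleGraph V) {n : ℕ} (B : Finset V) (hB : B.card + 2 = n) :
    ∑ k ∈ Finset.range n, C ((-1 : ℝ) ^ (k+1) * (mc G B k : ℝ)) * X ^ (n - 2 * (k+1))
      = -mp G B := by
  have h1 : ∀ k, C ((-1 : ℝ) ^ (k+1) * (mc G B k : ℝ)) * X ^ (n - 2 * (k+1))
      = -(C ((-1 : ℝ) ^ k * (mc G B k : ℝ)) * X ^ (n - 2 * (k+1))) := by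
    intro k
    rw [show ((-1 : ℝ) ^ (k+1) * (mc G B k : ℝ)) = -((-1 : ℝ) ^ k * (mc G B k : ℝ)) by ring,
      map_neg, neg_mul]
  simp only [h1, Finset.sum_neg_distrib]
  rw [neg_inj]
  have hn : n = (B.card + 1) + 1 := by omega
  rw [hn, Finset.sum_range_succ]
  have hzero : mc G B (B.card + 1) = 0 := mc_eq_zero_of_lt (by omega)
  rw [hzero]
  simp only [Nat.cast_zero, mul_zero, map_zero, zero_mul, add_zero]
  rw [mp]
  refine Finset.sum_congr rfl fun k hk => ?_
  congr 2
  omega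

open Classical in
/-- The vertex deletion identity for the matching polynomial. -/
lemma mp_vertex [DecidableEq V] (G : SimpleGraph V) {A : Finset V} {u : V} (hu : u ∈ A) :
    mp G A = X * mp G (A.erase u)
      - ∑ v ∈ (A.erase u).filter (G.Adj u), mp G ((A.erase u).erase v) := by
  have hn : 1 ≤ A.card := Finset.card_pos.mpr ⟨u, hu⟩
  have hm : (A.erase u).card = A.card - 1 := Finset.card_erase_of_mem hu
  have hsplit : mp G A =
      (∑ k ∈ Finset.range (A.card+1),
        C ((-1 : ℝ) ^ k * (mc G (A.erase u) k : ℝ)) * X ^ (A.card - 2*k))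
      + ∑ k ∈ Finset.range (A.card+1),
          C ((-1 : ℝ) ^ k * ((if k = 0 then 0 else
            ∑ v ∈ (A.erase u).filter (G.Adj u), mc G ((A.erase u).erase v) (k-1)) : ℕ))
            * X ^ (A.card - 2*k) := by
    rw [mp, ← Finset.sum_add_distrib]
    refine Finset.sum_congr rfl fun k hk => ?_
    rw [← add_mul, ← map_add]
    congr 2
    rcases k with _ | k
    · simp [mc_zero]
    · rw [mc_vertex_rec hu k, if_neg (Nat.succ_ne_zero k)]
      push_cast
      ring
  rw [hsplit]
  have h1 : (∑ k ∈ Finset.range (A.card+1),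
        C ((-1 : ℝ) ^ k * (mc G (A.erase u) k : ℝ)) * X ^ (A.card - 2*k))
      = X * mp G (A.erase u) := by
    rw [mp, Finset.mul_sum]
    have hrange : A.card + 1 = ((A.erase u).card + 1) + 1 := by omega
    rw [hrange, Finset.sum_range_succ]
    have hzero : mc G (A.erase u) ((A.erase u).card + 1) = 0 := mc_eq_zero_of_lt (by omega)
    rw [hzero]
    simp only [Nat.cast_zero, mul_zero, map_zero, zero_mul, add_zero]
    refine Finset.sum_congr rfl fun k hk => ?_
    rw [Finset.mem_range] at hk
    rcases le_or_gt (2*k) (A.erase u).card with hle | hlt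
    · rw [mul_comm X _, mul_assoc, ← pow_succ]
      congr 2
      omega
    · rw [mc_eq_zero_of_lt hlt]
      simp
  have h2 : (∑ k ∈ Finset.range (A.card+1),
          C ((-1 : ℝ) ^ k * ((if k = 0 then 0 else
            ∑ v ∈ (A.erase u).filter (G.Adj u), mc G ((A.erase u).erase v) (k-1)) : ℕ))
            * X ^ (A.card - 2*k))
      = - ∑ v ∈ (A.erase u).filter (G.Adj u), mp G ((A.erase u).erase v) := by
    rw [Finset.sum_range_succ']
    simp only [reduceIte, Nat.cast_zero, mul_zero, map_zero, zero_mul, add_zero, pow_zero,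
      one_mul]
    have hstep : ∀ k ∈ Finset.range A.card,
        C ((-1 : ℝ) ^ (k+1) * ((if k + 1 = 0 then 0 else
            ∑ v ∈ (A.erase u).filter (G.Adj u), mc G ((A.erase u).erase v) (k+1-1)) : ℕ))
            * X ^ (A.card - 2*(k+1))
        = ∑ v ∈ (A.erase u).filter (G.Adj u),
            C ((-1 : ℝ) ^ (k+1) * (mc G ((A.erase u).erase v) k : ℝ)) * X ^ (A.card - 2*(k+1)) := by
      intro k hk
      rw [if_neg (Nat.succ_ne_zero k)]
      push_cast
      rw [Finset.mul_sum, map_sum, Finset.sum_mul]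
    rw [Finset.sum_congr rfl hstep, Finset.sum_comm, ← Finset.sum_neg_distrib]
    refine Finset.sum_congr rfl fun v hv => ?_
    rw [Finset.mem_filter] at hv
    have hcard : ((A.erase u).erase v).card + 2 = A.card := by
      rw [Finset.card_erase_of_mem hv.1, hm]
      have : 1 ≤ (A.erase u).card := Finset.card_pos.mpr ⟨v, hv.1⟩
      omega
    exact sum_succ_mp G _ hcard
  rw [h1, h2, sub_eq_add_neg]

open Classical in
/-- The edge deletion identity for the matching polynomial. -/
lemma mp_edge [DecidableEq V] (G : SimpleGraph V) {A : Finset V} {u v : V}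
    (h : G.Adj u v) (hu : u ∈ A) (hv : v ∈ A) :
    mp G A = mp (G.deleteEdges {s(u,v)}) A - mp G ((A.erase u).erase v) := by
  have hvu : v ∈ A.erase u := Finset.mem_erase.mpr ⟨h.ne', hv⟩
  have hn : 2 ≤ A.card := by
    have h0 := Finset.card_erase_of_mem hu
    have h1 : 1 ≤ (A.erase u).card := Finset.card_pos.mpr ⟨v, hvu⟩
    have h2 : 1 ≤ A.card := Finset.card_pos.mpr ⟨u, hu⟩
    omega
  have hsplit : mp G A =
      (∑ k ∈ Finset.range (A.card+1),
        C ((-1 : ℝ) ^ k * (mc (G.deleteEdges {s(u,v)}) A k : ℝ)) * X ^ (A.card - 2*k))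
      + ∑ k ∈ Finset.range (A.card+1),
          C ((-1 : ℝ) ^ k * ((if k = 0 then 0 else
            mc G ((A.erase u).erase v) (k-1)) : ℕ)) * X ^ (A.card - 2*k) := by
    rw [mp, ← Finset.sum_add_distrib]
    refine Finset.sum_congr rfl fun k hk => ?_
    rw [← add_mul, ← map_add]
    congr 2
    rcases k with _ | k
    · simp [mc_zero]
    · rw [mc_edge_rec h hu hv k, if_neg (Nat.succ_ne_zero k)]
      push_cast
      ring
  rw [hsplit]
  have h2 : (∑ k ∈ Finset.range (A.card+1),
          C ((-1 : ℝ) ^ k * ((if k = 0 then 0 else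
            mc G ((A.erase u).erase v) (k-1)) : ℕ)) * X ^ (A.card - 2*k))
      = - mp G ((A.erase u).erase v) := by
    rw [Finset.sum_range_succ']
    simp only [reduceIte, Nat.cast_zero, mul_zero, map_zero, zero_mul, add_zero, pow_zero,
      one_mul]
    have hcard : ((A.erase u).erase v).card + 2 = A.card := by
      rw [Finset.card_erase_of_mem hvu, Finset.card_erase_of_mem hu]
      omega
    rw [← sum_succ_mp G _ hcard]
    refine Finset.sum_congr rfl fun k hk => ?_
    rw [if_neg (Nat.succ_ne_zero k), Nat.add_sub_cancel]
  have h1 : (∑ k ∈ Finset.range (A.card+1),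
        C ((-1 : ℝ) ^ k * (mc (G.deleteEdges {s(u,v)}) A k : ℝ)) * X ^ (A.card - 2*k))
      = mp (G.deleteEdges {s(u,v)}) A := by
    rw [mp]
  rw [h1, h2, sub_eq_add_neg]

open Classical in
/-- Interlacing-type lemma: removing a vertex does not increase the largest root. -/
lemma troot_erase_le [DecidableEq V] (G : SimpleGraph V) :
    ∀ (n : ℕ) (A : Finset V), A.card ≤ n → ∀ u ∈ A,
      troot (mp G (A.erase u)) ≤ troot (mp G A) := by
  intro n
  induction n with
  | zero =>
    intro A hA u hu
    have : A.card ≠ 0 := fun h => by simp [Finset.card_eq_zero.mp h] at hu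
    omega
  | succ n ih =>
    intro A hA u hu
    rcases Set.eq_empty_or_nonempty {x : ℝ | (mp G (A.erase u)).eval x = 0} with he | hne
    · rw [troot, he, Real.sSup_empty]
      exact troot_mp_nonneg G A
    · have hfin : {x : ℝ | (mp G (A.erase u)).eval x = 0}.Finite :=
        (mp G (A.erase u)).finite_setOf_isRoot (mp_monic G (A.erase u)).ne_zero
      have hρmem : troot (mp G (A.erase u)) ∈ {x : ℝ | (mp G (A.erase u)).eval x = 0} :=
        hne.csSup_mem hfin
      set ρ := troot (mp G (A.erase u)) with hρ
      have hρroot : (mp G (A.erase u)).eval ρ = 0 := hρmem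
      by_contra hcon
      push_neg at hcon
      have hpos : 0 < (mp G A).eval ρ :=
        eval_pos_of_roots_lt (mp_monic G A) fun r hr =>
          lt_of_le_of_lt (root_le_troot (mp_monic G A).ne_zero hr) hcon
      have heval : (mp G A).eval ρ =
          ρ * (mp G (A.erase u)).eval ρ -
            ∑ v ∈ (A.erase u).filter (G.Adj u), (mp G ((A.erase u).erase v)).eval ρ := by
        rw [mp_vertex G hu]
        simp [eval_finset_sum]
      have hsum : 0 ≤ ∑ v ∈ (A.erase u).filter (G.Adj u), (mp G ((A.erase u).erase v)).eval ρ := by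
        apply Finset.sum_nonneg
        intro v hv
        rw [Finset.mem_filter] at hv
        have hcard : (A.erase u).card ≤ n := by
          have := Finset.card_erase_of_mem hu
          have : 1 ≤ A.card := Finset.card_pos.mpr ⟨u, hu⟩
          omega
        have htr : troot (mp G ((A.erase u).erase v)) ≤ ρ := ih (A.erase u) hcard v hv.1
        exact eval_mp_nonneg htr
      rw [heval, hρroot, mul_zero] at hpos
      linarith

lemma exists_edge_not_mem {G H : SimpleGraph V} (hle : H ≤ G) (hne : H ≠ G) :
    ∃ u v : V, G.Adj u v ∧ ¬ H.Adj u v := by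
  by_contra hcon
  push_neg at hcon
  exact hne (le_antisymm hle fun u v h => hcon u v h)

open Classical in
lemma main_aux [DecidableEq V] :
    ∀ (N : ℕ) (G H : SimpleGraph V), G.edgeSet.ncard ≤ N → H ≤ G → H ≠ G →
      ∀ x : ℝ, troot (mp G Finset.univ) < x →
        (mp G Finset.univ).eval x < (mp H Finset.univ).eval x := by
  intro N
  induction N with
  | zero =>
    intro G H hcard hle hne x hx
    obtain ⟨u, v, hG, hH⟩ := exists_edge_not_mem hle hne
    have hmem : s(u,v) ∈ G.edgeSet := G.mem_edgeSet.mpr hG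
    have : G.edgeSet = ∅ := Set.ncard_eq_zero (Set.toFinite _) |>.mp (Nat.le_zero.mp hcard)
    rw [this] at hmem
    exact absurd hmem (Set.notMem_empty _)
  | succ N ih =>
    intro G H hcard hle hne x hx
    obtain ⟨u, v, hG, hH⟩ := exists_edge_not_mem hle hne
    have key1 : mp G Finset.univ = mp (G.deleteEdges {s(u,v)}) Finset.univ
        - mp G ((Finset.univ.erase u).erase v) :=
      mp_edge G hG (Finset.mem_univ u) (Finset.mem_univ v)
    have hB : troot (mp G ((Finset.univ.erase u).erase v)) ≤ troot (mp G Finset.univ) := by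
      have h1 : troot (mp G ((Finset.univ.erase u).erase v))
          ≤ troot (mp G (Finset.univ.erase u)) :=
        troot_erase_le G (Finset.univ.erase u).card (Finset.univ.erase u) le_rfl v
          (Finset.mem_erase.mpr ⟨hG.ne', Finset.mem_univ v⟩)
      have h2 : troot (mp G (Finset.univ.erase u)) ≤ troot (mp G Finset.univ) :=
        troot_erase_le G Finset.univ.card Finset.univ le_rfl u (Finset.mem_univ u)
      exact le_trans h1 h2
    have hposB : 0 < (mp G ((Finset.univ.erase u).erase v)).eval x :=
      eval_mp_pos (lt_of_le_of_lt hB hx)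
    have hGx : (mp G Finset.univ).eval x < (mp (G.deleteEdges {s(u,v)}) Finset.univ).eval x := by
      rw [key1, eval_sub]
      linarith
    have hHG' : H ≤ G.deleteEdges {s(u,v)} := by
      intro a b hab
      rw [SimpleGraph.deleteEdges_adj]
      refine ⟨hle hab, ?_⟩
      intro hmem
      rw [Set.mem_singleton_iff, Sym2.eq_iff] at hmem
      rcases hmem with ⟨rfl, rfl⟩ | ⟨rfl, rfl⟩
      · exact hH hab
      · exact hH hab.symm
    rcases eq_or_ne H (G.deleteEdges {s(u,v)}) with rfl | hne'
    · exact hGx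
    · have htroot' : troot (mp (G.deleteEdges {s(u,v)}) Finset.univ)
          ≤ troot (mp G Finset.univ) := by
        apply troot_le_of_roots_le (troot_mp_nonneg G Finset.univ)
        intro r hr
        by_contra hcon
        push_neg at hcon
        have p1 : 0 < (mp G Finset.univ).eval r := eval_mp_pos hcon
        have p2 : 0 ≤ (mp G ((Finset.univ.erase u).erase v)).eval r :=
          eval_mp_nonneg (le_trans hB (le_of_lt hcon))
        have : (mp (G.deleteEdges {s(u,v)}) Finset.univ).eval r =
            (mp G Finset.univ).eval r + (mp G ((Finset.univ.erase u).erase v)).eval r := by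
          rw [key1, eval_sub]; ring
        rw [hr] at this
        linarith
      have hcard' : (G.deleteEdges {s(u,v)}).edgeSet.ncard ≤ N := by
        have hss : (G.deleteEdges {s(u,v)}).edgeSet ⊂ G.edgeSet := by
          rw [SimpleGraph.edgeSet_deleteEdges]
          refine ⟨Set.diff_subset, fun hsub => ?_⟩
          have := hsub (G.mem_edgeSet.mpr hG)
          rw [Set.mem_diff] at this
          exact this.2 rfl
        have := Set.ncard_lt_ncard hss (Set.toFinite _)
        omega
      have hrec := ih (G.deleteEdges {s(u,v)}) H hcard' hHG' hne' x
        (lt_of_le_of_lt htroot' hx)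
      linarith

lemma matchingCount_eq (G : SimpleGraph V) (k : ℕ) :
    matchingCount G k = mc G Finset.univ k := by
  rw [matchingCount, mc]
  apply Nat.card_congr
  apply Equiv.subtypeEquivRight
  intro s
  constructor
  · rintro ⟨h1, h2, h3⟩
    exact ⟨⟨h2, h3, fun e he x hx => Finset.mem_univ x⟩, h1⟩
  · rintro ⟨⟨h2, h3, -⟩, h1⟩
    exact ⟨h1, h2, h3⟩

lemma matchPoly_eq (G : SimpleGraph V) : matchPoly G = mp G Finset.univ := by
  rw [matchPoly, mp, Finset.card_univ]
  exact Finset.sum_congr rfl fun k _ => by rw [matchingCount_eq]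

end Aux

/-- If `H` is a proper spanning subgraph of `G` (not necessarily connected), then
`m(H,x) > m(G,x)` for all `x > t(G)`. -/
theorem matchPoly_lt_of_proper_spanning_subgraph {V : Type*} [Fintype V]
    (G H : SimpleGraph V) (hHG : H ≤ G) (hne : H ≠ G) :
    ∀ x : ℝ, maxRoot G < x → (matchPoly G).eval x < (matchPoly H).eval x := by
  classical
  intro x hx
  have hmax : maxRoot G = troot (mp G Finset.univ) := by
    rw [maxRoot, ← matchPoly_eq]; rfl
  rw [matchPoly_eq G, matchPoly_eq H]
  exact main_aux G.edgeSet.ncard G H le_rfl hHG hne x (by rw [← hmax]; exact hx)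
end
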